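/- arXiv:1111.4963 — 7 statements merged into one kernel-verified Lean document; each statement's English description precedes it below -/
import Mathlib

section
/- Let K be a number field and let α, β be nonzero algebraic integers in the ring of integers O_K. Then the relative height satisfies H_K(α/β) = N(α,β)^{-1} · ∏_{v ∈ M_K^∞} max{|α|_v^{n_v}, |β|_v^{n_v}}, where N(α,β) denotes the absolute norm of the ideal generated by α and β. -/
open NumberField IsDedekindDomain Real
open scoped nonZeroDivisors Classical

section aux
variable {R : Type*} [CommRing R] [IsDedekindDomain R]

/-- exponent of `v` in `I` -/
noncomputable def cnt (v : HeightOneSpectrum R) (I : Ideal R) : ℕ :=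
  (Associates.mk v.asIdeal).count (Associates.mk I).factors

theorem pow_dvd_iff_le_cnt (v : HeightOneSpectrum R) {I : Ideal R} (hI : I ≠ 0) (n : ℕ) :
    v.asIdeal ^ n ∣ I ↔ n ≤ cnt v I := by
  rw [← Associates.mk_dvd_mk, Associates.mk_pow]
  exact Associates.prime_pow_dvd_iff_le (Associates.mk_ne_zero.mpr hI) v.associates_irreducible

theorem cnt_sup (v : HeightOneSpectrum R) {I J : Ideal R} (hI : I ≠ 0) (hJ : J ≠ 0) :
    cnt v (I ⊔ J) = min (cnt v I) (cnt v J) := by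
  have hIJ : I ⊔ J ≠ 0 := by
    intro h
    exact hI (le_antisymm (h ▸ le_sup_left) bot_le)
  apply le_antisymm
  · exact le_min
      ((pow_dvd_iff_le_cnt v hI _).mp (dvd_trans ((pow_dvd_iff_le_cnt v hIJ _).mpr le_rfl)
        (Ideal.dvd_iff_le.mpr le_sup_left)))
      ((pow_dvd_iff_le_cnt v hJ _).mp (dvd_trans ((pow_dvd_iff_le_cnt v hIJ _).mpr le_rfl)
        (Ideal.dvd_iff_le.mpr le_sup_right)))
  · refine (pow_dvd_iff_le_cnt v hIJ _).mp (Ideal.dvd_iff_le.mpr (sup_le ?_ ?_))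
    · exact Ideal.le_of_dvd ((pow_dvd_iff_le_cnt v hI _).mpr (min_le_left _ _))
    · exact Ideal.le_of_dvd ((pow_dvd_iff_le_cnt v hJ _).mpr (min_le_right _ _))

end aux

variable (K : Type*) [Field K] [NumberField K]

theorem one_lt_absNormv (v : HeightOneSpectrum (𝓞 K)) : 1 < Ideal.absNorm v.asIdeal := by
  have h0 : Ideal.absNorm v.asIdeal ≠ 0 :=
    Ideal.absNorm_ne_zero_iff_mem_nonZeroDivisors.mpr
      (mem_nonZeroDivisors_iff_ne_zero.mpr v.ne_bot)
  have h1 : Ideal.absNorm v.asIdeal ≠ 1 := by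
    rw [Ne, Ideal.absNorm_eq_one_iff]
    exact v.isPrime.ne_top
  omega

theorem cnt_support {I : Ideal (𝓞 K)} (hI : I ≠ 0) :
    (Function.mulSupport fun v : HeightOneSpectrum (𝓞 K) =>
      (Ideal.absNorm v.asIdeal : ℝ) ^ cnt v I).Finite := by
  apply (Ideal.finite_mulSupport hI).subset
  intro v hv
  simp only [Function.mem_mulSupport, IsDedekindDomain.HeightOneSpectrum.maxPowDividing] at *
  rcases Nat.eq_zero_or_pos (cnt v I) with h0 | h0
  · exact absurd (by rw [h0, pow_zero]) hv
  · intro h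
    have hne := v.isPrime.ne_top
    rw [Ideal.one_eq_top] at h
    exact hne (le_antisymm le_top
      (h ▸ Ideal.pow_le_self (Nat.pos_iff_ne_zero.mp h0)))

theorem absNorm_eq_finprod {I : Ideal (𝓞 K)} (hI : I ≠ 0) :
    (Ideal.absNorm I : ℝ) =
      ∏ᶠ v : HeightOneSpectrum (𝓞 K), (Ideal.absNorm v.asIdeal : ℝ) ^ cnt v I := by
  classical
  have hfin := Ideal.finite_mulSupport hI
  have hfin2 := cnt_support K hI
  set s : Finset (HeightOneSpectrum (𝓞 K)) := hfin.toFinset ∪ hfin2.toFinset with hs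
  have hsub1 : (Function.mulSupport fun v : HeightOneSpectrum (𝓞 K) =>
      v.maxPowDividing I) ⊆ ↑s := fun v hv =>
    Finset.mem_coe.mpr (Finset.mem_union_left _ (hfin.mem_toFinset.mpr hv))
  have hsub2 : (Function.mulSupport fun v : HeightOneSpectrum (𝓞 K) =>
      (Ideal.absNorm v.asIdeal : ℝ) ^ cnt v I) ⊆ ↑s := fun v hv =>
    Finset.mem_coe.mpr (Finset.mem_union_right _ (hfin2.mem_toFinset.mpr hv))
  have h1 : (∏ v ∈ s, v.asIdeal ^ cnt v I) = I := by
    conv_rhs => rw [← Ideal.finprod_heightOneSpectrum_factorization hI]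
    exact (finprod_eq_prod_of_mulSupport_subset _ hsub1).symm
  conv_lhs => rw [← h1]
  rw [map_prod, Nat.cast_prod, finprod_eq_prod_of_mulSupport_subset _ hsub2]
  exact Finset.prod_congr rfl fun v _ => by rw [map_pow, Nat.cast_pow]

/-- The normalized `v`-adic absolute value `|x|_v^{n_v} = N(v)^{-ord_v(x)}` at a finite place. -/
noncomputable def vadicAbs (v : HeightOneSpectrum (𝓞 K)) (x : K) : ℝ :=
  if hx : v.valuation K x = 0 then 0
  else (Ideal.absNorm v.asIdeal : ℝ) ^ (Multiplicative.toAdd (WithZero.unzero hx))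

theorem vadicAbs_div (v : HeightOneSpectrum (𝓞 K)) {α β : 𝓞 K} (hα : α ≠ 0) (hβ : β ≠ 0) :
    vadicAbs K v ((α : K) / (β : K)) =
      (Ideal.absNorm v.asIdeal : ℝ) ^
        ((cnt v (Ideal.span {β}) : ℤ) - (cnt v (Ideal.span {α}) : ℤ)) := by
  have hvv : v.valuation K ((α : K) / (β : K)) =
      (↑(Multiplicative.ofAdd ((cnt v (Ideal.span {β}) : ℤ) - (cnt v (Ideal.span {α}) : ℤ))) :
        WithZero (Multiplicative ℤ)) := by
    rw [NumberField.RingOfIntegers.coe_eq_algebraMap, NumberField.RingOfIntegers.coe_eq_algebraMap,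
      map_div₀, IsDedekindDomain.HeightOneSpectrum.valuation_of_algebraMap,
      IsDedekindDomain.HeightOneSpectrum.valuation_of_algebraMap,
      IsDedekindDomain.HeightOneSpectrum.intValuation_apply,
      IsDedekindDomain.HeightOneSpectrum.intValuation_apply,
      v.intValuationDef_if_neg hα, v.intValuationDef_if_neg hβ, ← WithZero.exp_sub,
      neg_sub_neg]
    rfl
  have h0 : v.valuation K ((α : K) / (β : K)) ≠ 0 := hvv ▸ WithZero.coe_ne_zero
  rw [vadicAbs, dif_neg h0]
  have hu : WithZero.unzero h0 = Multiplicative.ofAdd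
      ((cnt v (Ideal.span {β}) : ℤ) - (cnt v (Ideal.span {α}) : ℤ)) :=
    WithZero.coe_inj.mp (by rw [WithZero.coe_unzero, hvv])
  rw [hu, toAdd_ofAdd]

theorem max_vadicAbs_div (v : HeightOneSpectrum (𝓞 K)) {α β : 𝓞 K} (hα : α ≠ 0) (hβ : β ≠ 0) :
    max (vadicAbs K v ((α : K) / (β : K))) 1 =
      (Ideal.absNorm v.asIdeal : ℝ) ^
        (cnt v (Ideal.span {β}) - min (cnt v (Ideal.span {α})) (cnt v (Ideal.span {β}))) := by
  have hN : (1:ℝ) ≤ (Ideal.absNorm v.asIdeal : ℝ) := by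
    exact_mod_cast (one_lt_absNormv K v).le
  rw [vadicAbs_div K v hα hβ]
  set a := cnt v (Ideal.span {α}) with ha
  set b := cnt v (Ideal.span {β}) with hb
  rcases le_total a b with h | h
  · rw [min_eq_left h, max_eq_left (one_le_zpow₀ hN (by omega)),
      show ((b:ℤ) - a) = ((b - a : ℕ) : ℤ) by omega, zpow_natCast]
  · rw [min_eq_right h, Nat.sub_self, pow_zero,
      max_eq_right (zpow_le_one_of_nonpos₀ hN (by omega))]

theorem finprod_part {α β : 𝓞 K} (hα : α ≠ 0) (hβ : β ≠ 0) :
    (∏ᶠ v : HeightOneSpectrum (𝓞 K), max (vadicAbs K v ((α : K) / (β : K))) 1) *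
        (Ideal.absNorm (Ideal.span {α, β} : Ideal (𝓞 K)) : ℝ) =
      (Ideal.absNorm (Ideal.span {β} : Ideal (𝓞 K)) : ℝ) := by
  classical
  have hsa : (Ideal.span {α} : Ideal (𝓞 K)) ≠ 0 := by
    simpa [Ne, Ideal.span_singleton_eq_bot] using hα
  have hsb : (Ideal.span {β} : Ideal (𝓞 K)) ≠ 0 := by
    simpa [Ne, Ideal.span_singleton_eq_bot] using hβ
  have hspan : (Ideal.span {α, β} : Ideal (𝓞 K)) = Ideal.span {α} ⊔ Ideal.span {β} := by
    rw [Ideal.span_insert]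
  have hG : (Ideal.span {α, β} : Ideal (𝓞 K)) ≠ 0 := by
    rw [hspan]
    intro h
    exact hsa (le_antisymm (h ▸ le_sup_left) bot_le)
  -- rewrite each factor
  have h1 : (∏ᶠ v : HeightOneSpectrum (𝓞 K), max (vadicAbs K v ((α : K) / (β : K))) 1) =
      ∏ᶠ v : HeightOneSpectrum (𝓞 K), (Ideal.absNorm v.asIdeal : ℝ) ^
        (cnt v (Ideal.span {β}) - cnt v (Ideal.span {α, β})) := by
    refine finprod_congr fun v => ?_
    rw [max_vadicAbs_div K v hα hβ, hspan, cnt_sup v hsa hsb]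
  rw [h1, absNorm_eq_finprod K hG, absNorm_eq_finprod K hsb]
  have hfin1 : (Function.mulSupport fun v : HeightOneSpectrum (𝓞 K) =>
      (Ideal.absNorm v.asIdeal : ℝ) ^
        (cnt v (Ideal.span {β}) - cnt v (Ideal.span {α, β}))).Finite := by
    apply (cnt_support K hsb).subset
    intro v hv
    simp only [Function.mem_mulSupport] at hv ⊢
    intro h
    apply hv
    have hN : (1:ℝ) < (Ideal.absNorm v.asIdeal : ℝ) := by
      exact_mod_cast one_lt_absNormv K v
    rcases Nat.eq_zero_or_pos (cnt v (Ideal.span {β})) with h0 | h0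
    · rw [show cnt v (Ideal.span {β}) - cnt v (Ideal.span {α, β}) = 0 by omega, pow_zero]
    · exact absurd h (one_lt_pow₀ hN (by omega)).ne'
  have hfin2 := cnt_support K hG
  rw [← finprod_mul_distrib hfin1 hfin2]
  refine finprod_congr fun v => ?_
  rw [← pow_add]
  congr 1
  have : cnt v (Ideal.span {α, β}) ≤ cnt v (Ideal.span {β}) := by
    rw [hspan, cnt_sup v hsa hsb]; omega
  omega

theorem inf_part {α β : 𝓞 K} (hβ : β ≠ 0) :
    (∏ w : InfinitePlace K, max (w ((α : K) / (β : K)) ^ w.mult) 1) *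
        (Ideal.absNorm (Ideal.span {β} : Ideal (𝓞 K)) : ℝ) =
      ∏ w : InfinitePlace K, max (w (α : K) ^ w.mult) (w (β : K) ^ w.mult) := by
  have hβK : (β : K) ≠ 0 := by exact_mod_cast hβ
  have hnorm : (Ideal.absNorm (Ideal.span {β} : Ideal (𝓞 K)) : ℝ) =
      ∏ w : InfinitePlace K, w (β : K) ^ w.mult := by
    rw [InfinitePlace.prod_eq_abs_norm, ← Algebra.coe_norm_int, Ideal.absNorm_span_singleton]
    rw [Nat.cast_natAbs]
    push_cast
    ring
  rw [hnorm, ← Finset.prod_mul_distrib]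
  refine Finset.prod_congr rfl fun w _ => ?_
  have h0 : 0 < w (β : K) ^ w.mult := pow_pos (InfinitePlace.pos_iff.mpr hβK) _
  rw [map_div₀, div_pow,
    show (1:ℝ) = w (β : K) ^ w.mult / w (β : K) ^ w.mult from (div_self h0.ne').symm,
    max_div_div_right h0.le, div_mul_cancel₀ _ h0.ne']

/-- The relative multiplicative height `H_K(x) = ∏_{v ∈ M_K} max {|x|_v^{n_v}, 1}`. -/
noncomputable def relHeight (x : K) : ℝ :=
  (∏ w : InfinitePlace K, max (w x ^ w.mult) 1) *
    ∏ᶠ v : HeightOneSpectrum (𝓞 K), max (vadicAbs K v x) 1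

theorem height_eq_inv_norm_mul_prod_max (α β : 𝓞 K) (hα : α ≠ 0) (hβ : β ≠ 0) :
    relHeight K ((α : K) / (β : K)) =
      (Ideal.absNorm (Ideal.span {α, β}) : ℝ)⁻¹ *
        ∏ w : InfinitePlace K, max (w (α : K) ^ w.mult) (w (β : K) ^ w.mult) := by
  have hsb : (Ideal.span {β} : Ideal (𝓞 K)) ≠ 0 := by
    simpa [Ne, Ideal.span_singleton_eq_bot] using hβ
  have hG : (Ideal.span {α, β} : Ideal (𝓞 K)) ≠ 0 := by
    rw [Ideal.span_insert]
    intro h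
    apply hsb
    exact le_antisymm (h ▸ le_sup_right) bot_le
  have hNβ : (Ideal.absNorm (Ideal.span {β} : Ideal (𝓞 K)) : ℝ) ≠ 0 := by
    exact_mod_cast Ideal.absNorm_ne_zero_iff_mem_nonZeroDivisors.mpr
      (mem_nonZeroDivisors_iff_ne_zero.mpr hsb)
  have hNG : (Ideal.absNorm (Ideal.span {α, β} : Ideal (𝓞 K)) : ℝ) ≠ 0 := by
    exact_mod_cast Ideal.absNorm_ne_zero_iff_mem_nonZeroDivisors.mpr
      (mem_nonZeroDivisors_iff_ne_zero.mpr hG)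
  have h1 := inf_part K (α := α) hβ
  have h2 := finprod_part K hα hβ
  rw [relHeight, (eq_div_iff hNβ).mpr h1, (eq_div_iff hNG).mpr h2,
    div_mul_div_comm, mul_comm]
  rw [mul_div_mul_left _ _ hNβ, div_eq_inv_mul]
end

section
/- Let K be a number field and γ ∈ K^* with H_K(γ) ≤ B. Write the fractional ideal (γ) = I·J^{-1} with I, J coprime integral ideals, and suppose a is an integral ideal in the inverse ideal class of I (equivalently of J), so that aI = (α) and aJ = (β) are principal with γ = α/β (after scaling α by a unit). Then |N_{K/Q}(α)| ≤ B·N(a) and |N_{K/Q}(β)| ≤ B·N(a), and the ideal generated by α and β equals a. -/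
open NumberField IsDedekindDomain Real
open scoped nonZeroDivisors Classical

variable (K : Type*) [Field K] [NumberField K]

/-- Multiplicity of the prime `v` in a nonzero ideal. -/
noncomputable def cntK (v : HeightOneSpectrum (𝓞 K)) (I : Ideal (𝓞 K)) : ℕ :=
  (Associates.mk v.asIdeal).count (Associates.mk I).factors

lemma cntK_mul (v : HeightOneSpectrum (𝓞 K)) {I J : Ideal (𝓞 K)} (hI : I ≠ 0) (hJ : J ≠ 0) :
    cntK K v (I * J) = cntK K v I + cntK K v J := by
  unfold cntK
  rw [← Associates.mk_mul_mk]
  exact Associates.count_mul (Associates.mk_ne_zero.mpr hI) (Associates.mk_ne_zero.mpr hJ)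
    v.associates_irreducible

lemma val_div (v : HeightOneSpectrum (𝓞 K)) {α β : 𝓞 K} (hα : α ≠ 0) (hβ : β ≠ 0) :
    v.valuation K ((α : K) / (β : K)) =
      ((Multiplicative.ofAdd ((cntK K v (Ideal.span {β}) : ℤ) -
        (cntK K v (Ideal.span {α}) : ℤ))) : Multiplicative ℤ) := by
  rw [RingOfIntegers.coe_eq_algebraMap, RingOfIntegers.coe_eq_algebraMap, map_div₀,
    HeightOneSpectrum.valuation_of_algebraMap, HeightOneSpectrum.valuation_of_algebraMap,
    HeightOneSpectrum.intValuation_apply, HeightOneSpectrum.intValuation_apply,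
    v.intValuationDef_if_neg hα, v.intValuationDef_if_neg hβ, ← WithZero.exp_sub,
    neg_sub_neg]
  rfl

theorem norm_bounds_of_height_le (B : ℝ) (γ : K) (hγ : γ ≠ 0) (hB : relHeight K γ ≤ B)
    (I J : Ideal (𝓞 K)) (hIJ : I ⊔ J = ⊤)
    (hfrac : FractionalIdeal.spanSingleton (𝓞 K)⁰ γ =
      (I : FractionalIdeal (𝓞 K)⁰ K) * (J : FractionalIdeal (𝓞 K)⁰ K)⁻¹)
    (a : Ideal (𝓞 K)) (α β : 𝓞 K)
    (haI : a * I = Ideal.span {α}) (haJ : a * J = Ideal.span {β})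
    (hγαβ : γ = (α : K) / (β : K)) :
    |Algebra.norm ℚ (α : K)| ≤ B * (Ideal.absNorm a : ℝ) ∧
    |Algebra.norm ℚ (β : K)| ≤ B * (Ideal.absNorm a : ℝ) ∧
    Ideal.span {α, β} = a := by
  classical
  have hβK : (β : K) ≠ 0 := by
    intro h; rw [hγαβ, h, div_zero] at hγ; exact hγ rfl
  have hαK : (α : K) ≠ 0 := by
    intro h; rw [hγαβ, h, zero_div] at hγ; exact hγ rfl
  have hα0 : α ≠ 0 := fun h => hαK (by rw [h]; simp)
  have hβ0 : β ≠ 0 := fun h => hβK (by rw [h]; simp)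
  have hsα : Ideal.span {α} ≠ 0 := by simpa [Ideal.span_singleton_eq_bot] using hα0
  have hsβ : Ideal.span {β} ≠ 0 := by simpa [Ideal.span_singleton_eq_bot] using hβ0
  have ha0 : a ≠ 0 := by rintro rfl; rw [zero_mul] at haI; exact hsα haI.symm
  have hI0 : I ≠ 0 := by rintro rfl; rw [mul_zero] at haI; exact hsα haI.symm
  have hJ0 : J ≠ 0 := by rintro rfl; rw [mul_zero] at haJ; exact hsβ haJ.symm
  set c : HeightOneSpectrum (𝓞 K) → Ideal (𝓞 K) → ℕ := cntK K with hc
  have hcα : ∀ v, c v (Ideal.span {α}) = c v a + c v I := fun v => by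
    rw [← haI]; exact cntK_mul K v ha0 hI0
  have hcβ : ∀ v, c v (Ideal.span {β}) = c v a + c v J := fun v => by
    rw [← haJ]; exact cntK_mul K v ha0 hJ0
  -- absolute norms of ideals are nonzero
  have habsne : ∀ b : Ideal (𝓞 K), b ≠ 0 → Ideal.absNorm b ≠ 0 := fun b hb h =>
    hb (by rwa [Ideal.absNorm_eq_zero_iff] at h)
  have hNv : ∀ v : HeightOneSpectrum (𝓞 K), 1 ≤ (Ideal.absNorm v.asIdeal : ℝ) := fun v => by
    exact_mod_cast Nat.one_le_iff_ne_zero.mpr (habsne v.asIdeal v.ne_bot)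
  -- valuation of γ
  have hval : ∀ v : HeightOneSpectrum (𝓞 K), v.valuation K γ =
      ((Multiplicative.ofAdd ((c v (Ideal.span {β}) : ℤ) - (c v (Ideal.span {α}) : ℤ))) :
        Multiplicative ℤ) := fun v => by
    rw [hγαβ]; exact val_div K v hα0 hβ0
  have hvadic : ∀ v : HeightOneSpectrum (𝓞 K), vadicAbs K v γ =
      (Ideal.absNorm v.asIdeal : ℝ) ^
        ((c v (Ideal.span {β}) : ℤ) - (c v (Ideal.span {α}) : ℤ)) := by
    intro v
    have hne : v.valuation K γ ≠ 0 := by rw [hval v]; exact WithZero.coe_ne_zero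
    rw [vadicAbs, dif_neg hne]
    have h1 : WithZero.unzero hne =
        Multiplicative.ofAdd ((c v (Ideal.span {β}) : ℤ) - (c v (Ideal.span {α}) : ℤ)) := by
      rw [← WithZero.coe_inj, WithZero.coe_unzero, hval v]
    rw [h1, toAdd_ofAdd]
  set f : HeightOneSpectrum (𝓞 K) → ℝ := fun v => max (vadicAbs K v γ) 1 with hf
  have hf1 : ∀ v, (1 : ℝ) ≤ f v := fun v => le_max_right _ _
  have hsupp : Function.mulSupport f ⊆ {v | v.asIdeal ∣ Ideal.span {β}} := by
    intro v hv
    by_contra hdvd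
    apply hv
    have hcb : c v (Ideal.span {β}) = 0 := by
      by_contra h
      exact hdvd ((Associates.count_ne_zero_iff_dvd hsβ v.irreducible).mp h)
    have hle : vadicAbs K v γ ≤ 1 := by
      rw [hvadic v, hcb]
      exact zpow_le_one_of_nonpos₀ (hNv v) (by push_cast; omega)
    exact max_eq_right hle
  have hfinβ : {v : HeightOneSpectrum (𝓞 K) | v.asIdeal ∣ Ideal.span {β}}.Finite :=
    Ideal.finite_factors hsβ
  have hfinJ : {v : HeightOneSpectrum (𝓞 K) | v.asIdeal ∣ J}.Finite := Ideal.finite_factors hJ0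
  set S : Finset (HeightOneSpectrum (𝓞 K)) := hfinJ.toFinset with hS
  set T : Finset (HeightOneSpectrum (𝓞 K)) := hfinJ.toFinset ∪ hfinβ.toFinset with hT
  have hPf : (∏ᶠ v, f v) = ∏ v ∈ T, f v :=
    finprod_eq_prod_of_mulSupport_subset f (fun v hv =>
      Finset.mem_coe.mpr (Finset.mem_union_right _ (hfinβ.mem_toFinset.mpr (hsupp hv))))
  have hST : S ⊆ T := Finset.subset_union_left
  have hSnn : (0 : ℝ) ≤ ∏ v ∈ S, f v :=
    Finset.prod_nonneg fun i _ => zero_le_one.trans (hf1 i)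
  have h3 : (1 : ℝ) ≤ ∏ v ∈ T \ S, f v := by
    calc (1 : ℝ) = ∏ _v ∈ T \ S, (1 : ℝ) := (Finset.prod_const_one).symm
    _ ≤ ∏ v ∈ T \ S, f v :=
      Finset.prod_le_prod (fun _ _ => zero_le_one) (fun v _ => hf1 v)
  have h2 : ∏ v ∈ S, f v ≤ ∏ v ∈ T, f v := by
    rw [← Finset.prod_sdiff hST]
    calc ∏ v ∈ S, f v = 1 * ∏ v ∈ S, f v := (one_mul _).symm
    _ ≤ (∏ v ∈ T \ S, f v) * ∏ v ∈ S, f v := mul_le_mul_of_nonneg_right h3 hSnn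
  -- on S the factors are exactly N(v)^(c v J)
  have hfS : ∀ v ∈ S, f v = (Ideal.absNorm v.asIdeal : ℝ) ^ (c v J) := by
    intro v hvS
    have hvJ : v.asIdeal ∣ J := hfinJ.mem_toFinset.mp hvS
    have hvI : c v I = 0 := by
      by_contra h
      have hvI' : v.asIdeal ∣ I := (Associates.count_ne_zero_iff_dvd hI0 v.irreducible).mp h
      have htop : v.asIdeal = ⊤ := by
        rw [eq_top_iff, ← hIJ]
        exact sup_le (Ideal.le_of_dvd hvI') (Ideal.le_of_dvd hvJ)
      exact v.isPrime.ne_top htop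
    have hexp : (c v (Ideal.span {β}) : ℤ) - (c v (Ideal.span {α}) : ℤ) = (c v J : ℤ) := by
      rw [hcα v, hcβ v, hvI]; push_cast; ring
    have hvv : vadicAbs K v γ = (Ideal.absNorm v.asIdeal : ℝ) ^ (c v J) := by
      rw [hvadic v, hexp, zpow_natCast]
    rw [show f v = max (vadicAbs K v γ) 1 from rfl, hvv]
    exact max_eq_left (one_le_pow₀ (hNv v))
  -- N(J) as a product over S
  have hsubJ : Function.mulSupport (fun v : HeightOneSpectrum (𝓞 K) => v.maxPowDividing J)
      ⊆ ↑S := by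
    intro v hv
    rw [Finset.mem_coe, hS, hfinJ.mem_toFinset]
    by_contra hvJ
    apply hv
    have hcv : c v J = 0 := by
      by_contra h
      exact hvJ ((Associates.count_ne_zero_iff_dvd hJ0 v.irreducible).mp h)
    show v.maxPowDividing J = 1
    rw [HeightOneSpectrum.maxPowDividing, show (Associates.mk v.asIdeal).count
      (Associates.mk J).factors = c v J from rfl, hcv, pow_zero]
  have hJfac : J = ∏ v ∈ S, v.asIdeal ^ (c v J) := by
    conv_lhs => rw [← Ideal.finprod_heightOneSpectrum_factorization hJ0]
    rw [finprod_eq_prod_of_mulSupport_subset _ hsubJ]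
    exact Finset.prod_congr rfl fun v _ => rfl
  have h0 : Ideal.absNorm J = ∏ v ∈ S, Ideal.absNorm v.asIdeal ^ c v J := by
    conv_lhs => rw [hJfac]
    rw [map_prod]
    exact Finset.prod_congr rfl fun v _ => map_pow _ _ _
  have hNJprod : (Ideal.absNorm J : ℝ) = ∏ v ∈ S, f v := by
    rw [Finset.prod_congr rfl hfS, h0]
    push_cast
    rfl
  have hPfge : (Ideal.absNorm J : ℝ) ≤ ∏ᶠ v, f v := by
    rw [hPf, hNJprod]; exact h2
  -- infinite part
  set P : ℝ := ∏ w : InfinitePlace K, max (w γ ^ w.mult) 1 with hP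
  have hP1 : (1 : ℝ) ≤ P := by
    calc (1 : ℝ) = ∏ _w : InfinitePlace K, (1 : ℝ) := (Finset.prod_const_one).symm
    _ ≤ P := Finset.prod_le_prod (fun _ _ => zero_le_one) (fun w _ => le_max_right _ _)
  have hPnorm : ((|Algebra.norm ℚ γ| : ℚ) : ℝ) ≤ P := by
    rw [← InfinitePlace.prod_eq_abs_norm]
    exact Finset.prod_le_prod (fun w _ => pow_nonneg (apply_nonneg w γ) _)
      (fun w _ => le_max_left _ _)
  -- norms of α and β
  have habs : ∀ x : 𝓞 K, |Algebra.norm ℚ (x : K)| = (Ideal.absNorm (Ideal.span {x}) : ℚ) := by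
    intro x
    rw [← Algebra.coe_norm_int, Ideal.absNorm_span_singleton, Nat.cast_natAbs, Int.cast_abs]
  have hNα : |Algebra.norm ℚ (α : K)| = ((Ideal.absNorm a * Ideal.absNorm I : ℕ) : ℚ) := by
    rw [habs α, ← haI, map_mul]
  have hNβ : |Algebra.norm ℚ (β : K)| = ((Ideal.absNorm a * Ideal.absNorm J : ℕ) : ℚ) := by
    rw [habs β, ← haJ, map_mul]
  -- the norm of γ
  have hmul : γ * (β : K) = (α : K) := by rw [hγαβ]; field_simp
  have hnmul : Algebra.norm ℚ γ * Algebra.norm ℚ (β : K) = Algebra.norm ℚ (α : K) := by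
    rw [← map_mul, hmul]
  have hNβne : Algebra.norm ℚ (β : K) ≠ 0 := by
    intro h
    rw [h, abs_zero] at hNβ
    exact habsne J hJ0 (by
      have := habsne a ha0
      have h' : (Ideal.absNorm a * Ideal.absNorm J : ℕ) = 0 := by exact_mod_cast hNβ.symm
      exact (Nat.mul_eq_zero.mp h').resolve_left this)
  have hnormγ : |Algebra.norm ℚ γ| =
      ((Ideal.absNorm a * Ideal.absNorm I : ℕ) : ℚ) / ((Ideal.absNorm a * Ideal.absNorm J : ℕ) : ℚ) := by
    rw [← hNα, ← hNβ, ← abs_div]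
    congr 1
    field_simp [hNβne, ← hnmul]
    exact hnmul
  have hNaQ : ((Ideal.absNorm a : ℚ)) ≠ 0 := by exact_mod_cast habsne a ha0
  have hnormγ' : |Algebra.norm ℚ γ| = (Ideal.absNorm I : ℚ) / (Ideal.absNorm J : ℚ) := by
    rw [hnormγ]
    push_cast
    rw [mul_div_mul_left _ _ hNaQ]
  -- real versions
  have hNJR : (0 : ℝ) < (Ideal.absNorm J : ℝ) := by
    exact_mod_cast Nat.pos_of_ne_zero (habsne J hJ0)
  have hrelH : relHeight K γ = P * ∏ᶠ v, f v := rfl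
  have hPnn : (0 : ℝ) ≤ P := zero_le_one.trans hP1
  have hNJB : (Ideal.absNorm J : ℝ) ≤ B := by
    calc (Ideal.absNorm J : ℝ) = 1 * (Ideal.absNorm J : ℝ) := (one_mul _).symm
    _ ≤ P * ∏ᶠ v, f v := mul_le_mul hP1 hPfge (le_of_lt hNJR) hPnn
    _ = relHeight K γ := hrelH.symm
    _ ≤ B := hB
  have hratio : (Ideal.absNorm I : ℝ) / (Ideal.absNorm J : ℝ) ≤ P := by
    have h := hPnorm
    rw [hnormγ'] at h
    push_cast at h
    exact h
  have hNIB : (Ideal.absNorm I : ℝ) ≤ B := by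
    calc (Ideal.absNorm I : ℝ)
        = ((Ideal.absNorm I : ℝ) / (Ideal.absNorm J : ℝ)) * (Ideal.absNorm J : ℝ) :=
          (div_mul_cancel₀ _ (ne_of_gt hNJR)).symm
    _ ≤ P * ∏ᶠ v, f v := mul_le_mul hratio hPfge (le_of_lt hNJR) hPnn
    _ = relHeight K γ := hrelH.symm
    _ ≤ B := hB
  have hNann : (0 : ℝ) ≤ (Ideal.absNorm a : ℝ) := Nat.cast_nonneg _
  refine ⟨?_, ?_, ?_⟩
  · rw [hNα]
    push_cast
    nlinarith [mul_le_mul_of_nonneg_right hNIB hNann]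
  · rw [hNβ]
    push_cast
    nlinarith [mul_le_mul_of_nonneg_right hNJB hNann]
  · rw [show ({α, β} : Set (𝓞 K)) = insert α {β} from rfl, Ideal.span_insert, ← haI, ← haJ,
      ← Ideal.mul_sup, hIJ, Ideal.mul_top]
end

section
/- Let K be a number field with unit rank r ≥ 1, fundamental units ε_1,…,ε_r, and let Λ': O_K^× → R^r be the logarithmic embedding (deleting the last archimedean coordinate). Let T be the inverse of the r×r matrix S whose columns are Λ'(ε_j). If u ∈ O_K^× satisfies H_K(u) ≤ D, then there exist an integer point (n_1,…,n_r) in the polytope T([-log D, log D]^r) and a root of unity ζ ∈ μ_K such that u = ζ ε_1^{n_1} ⋯ ε_r^{n_r}. -/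
open NumberField IsDedekindDomain Real
open scoped nonZeroDivisors Classical

variable (K : Type*) [Field K] [NumberField K]

theorem vadicAbs_unit (v : HeightOneSpectrum (𝓞 K)) (u : (𝓞 K)ˣ) :
    vadicAbs K v (algebraMap (𝓞 K) K u) = 1 := by
  have h1 : v.valuation K (algebraMap (𝓞 K) K (u : 𝓞 K)) = 1 := by
    have ha : v.valuation K (algebraMap (𝓞 K) K (u : 𝓞 K)) ≤ 1 := v.valuation_le_one _
    have hb : v.valuation K (algebraMap (𝓞 K) K ((u⁻¹ : (𝓞 K)ˣ) : 𝓞 K)) ≤ 1 :=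
      v.valuation_le_one _
    have hm : v.valuation K (algebraMap (𝓞 K) K (u : 𝓞 K)) *
        v.valuation K (algebraMap (𝓞 K) K ((u⁻¹ : (𝓞 K)ˣ) : 𝓞 K)) = 1 := by
      rw [← map_mul, ← map_mul, Units.mul_inv, map_one, map_one]
    refine le_antisymm ha ?_
    calc (1 : WithZero (Multiplicative ℤ)) = _ * _ := hm.symm
      _ ≤ v.valuation K (algebraMap (𝓞 K) K (u : 𝓞 K)) * 1 := mul_le_mul_right hb _
      _ = v.valuation K (algebraMap (𝓞 K) K (u : 𝓞 K)) := mul_one _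
  have hx : v.valuation K (algebraMap (𝓞 K) K (u : 𝓞 K)) ≠ 0 := by
    rw [h1]; exact one_ne_zero
  rw [vadicAbs, dif_neg hx]
  have hunz : WithZero.unzero hx = 1 := by
    have h2 : ((WithZero.unzero hx : Multiplicative ℤ) : WithZero (Multiplicative ℤ))
        = ((1 : Multiplicative ℤ) : WithZero (Multiplicative ℤ)) := by
      rw [WithZero.coe_unzero, h1, WithZero.coe_one]
    exact WithZero.coe_inj.mp h2
  rw [hunz]
  simp

open NumberField.Units NumberField.Units.dirichletUnitTheorem in
theorem unit_of_bounded_height_in_polytope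
    (hr : 1 ≤ rank K)
    (ε : {w : InfinitePlace K // w ≠ (w₀ : InfinitePlace K)} → (𝓞 K)ˣ)
    (hfund : ∀ u : (𝓞 K)ˣ, ∃ ζ : (𝓞 K)ˣ,
      ∃ m : {w : InfinitePlace K // w ≠ (w₀ : InfinitePlace K)} → ℤ,
      ζ ∈ torsion K ∧ u = ζ * ∏ i, ε i ^ m i)
    (S : Matrix {w : InfinitePlace K // w ≠ (w₀ : InfinitePlace K)}
      {w : InfinitePlace K // w ≠ (w₀ : InfinitePlace K)} ℝ)
    (hS : ∀ i j, S i j = logEmbedding K (Additive.ofMul (ε j)) i)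
    (hSdet : IsUnit S.det)
    (D : ℝ) (hD : 1 ≤ D) (u : (𝓞 K)ˣ)
    (hu : relHeight K (algebraMap (𝓞 K) K u) ≤ D) :
    ∃ n : {w : InfinitePlace K // w ≠ (w₀ : InfinitePlace K)} → ℤ,
      ∃ ζ : (𝓞 K)ˣ, ζ ∈ torsion K ∧ u = ζ * ∏ i, ε i ^ n i ∧
        ∃ y : {w : InfinitePlace K // w ≠ (w₀ : InfinitePlace K)} → ℝ,
          (∀ i, |y i| ≤ Real.log D) ∧ (fun i => (n i : ℝ)) = S⁻¹.mulVec y := by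
  obtain ⟨ζ, m, hζ, hdecomp⟩ := hfund u
  -- the log embedding of u equals S.mulVec m
  have h0 : logEmbedding K (Additive.ofMul ζ) = 0 := logEmbedding_eq_zero_iff.mpr hζ
  have h1 : logEmbedding K (Additive.ofMul u)
      = ∑ j, (m j) • logEmbedding K (Additive.ofMul (ε j)) := by
    rw [hdecomp, ofMul_mul, map_add, h0, zero_add, ofMul_prod, map_sum]
    simp [ofMul_zpow]
  have hlog : logEmbedding K (Additive.ofMul u) = S.mulVec (fun j => (m j : ℝ)) := by
    funext i
    rw [h1]
    simp only [Matrix.mulVec, dotProduct, hS, Finset.sum_apply, Pi.smul_apply,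
      zsmul_eq_mul]
    exact Finset.sum_congr rfl fun j _ => mul_comm _ _
  -- the height bound
  have hfin : ∏ᶠ v : HeightOneSpectrum (𝓞 K), max (vadicAbs K v (algebraMap (𝓞 K) K u)) 1
      = 1 :=
    finprod_eq_one_of_forall_eq_one fun v => by rw [vadicAbs_unit]; exact max_self 1
  have hH : ∏ w : InfinitePlace K,
      max ((w (algebraMap (𝓞 K) K u)) ^ w.mult) 1 ≤ D := by
    have := hu
    rw [relHeight, hfin, mul_one] at this
    exact this
  have hone : ∀ w : InfinitePlace K,
      (1:ℝ) ≤ max ((w (algebraMap (𝓞 K) K u)) ^ w.mult) 1 := fun w => le_max_right _ _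
  have hnn : ∀ w : InfinitePlace K,
      (0:ℝ) ≤ max ((w (algebraMap (𝓞 K) K u)) ^ w.mult) 1 := fun w =>
    le_trans zero_le_one (hone w)
  have hprod_one_le : ∀ s : Finset (InfinitePlace K),
      (1:ℝ) ≤ ∏ w ∈ s, max ((w (algebraMap (𝓞 K) K u)) ^ w.mult) 1 := fun s => by
    calc (1:ℝ) = ∏ _w ∈ s, (1:ℝ) := (Finset.prod_const_one).symm
      _ ≤ _ := Finset.prod_le_prod (fun _ _ => zero_le_one) (fun w _ => hone w)
  have hmax : ∀ w : InfinitePlace K,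
      max ((w (algebraMap (𝓞 K) K u)) ^ w.mult) 1 ≤ D := by
    intro w
    refine le_trans ?_ hH
    rw [← Finset.mul_prod_erase Finset.univ _ (Finset.mem_univ w)]
    exact le_mul_of_one_le_right (hnn w) (hprod_one_le _)
  have hxne : (algebraMap (𝓞 K) K u) ≠ 0 := by
    simpa using (coe_ne_zero u)
  have hprod : ∏ w : InfinitePlace K, (w (algebraMap (𝓞 K) K u)) ^ w.mult = 1 := by
    rw [InfinitePlace.prod_eq_abs_norm]
    rw [show (algebraMap (𝓞 K) K u) = ((u : 𝓞 K) : K) from rfl, Units.norm, Rat.cast_one]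
  have hbound : ∀ i, |logEmbedding K (Additive.ofMul u) i| ≤ Real.log D := by
    intro i
    set x := algebraMap (𝓞 K) K u with hxdef
    set t := (i.val x) ^ (i.val.mult) with htdef
    have htpos : 0 < t := by
      apply pow_pos
      exact ((apply_nonneg i.val x).lt_of_ne' (by simpa using hxne))
    have htD : t ≤ D := le_trans (le_max_left _ _) (hmax i.val)
    have htinv : t⁻¹ ≤ D := by
      have herase : t * ∏ w ∈ Finset.univ.erase i.val, (w x) ^ w.mult = 1 := by
        rw [htdef, Finset.mul_prod_erase Finset.univ (fun w : InfinitePlace K => w x ^ w.mult) (Finset.mem_univ i.val)]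
        exact hprod
      have h2 : ∏ w ∈ Finset.univ.erase i.val, (w x) ^ w.mult ≤ D := by
        calc ∏ w ∈ Finset.univ.erase i.val, (w x) ^ w.mult
            ≤ ∏ w ∈ Finset.univ.erase i.val, max ((w x) ^ w.mult) 1 :=
              Finset.prod_le_prod (fun w _ => pow_nonneg (apply_nonneg w x) _)
                (fun w _ => le_max_left _ _)
          _ ≤ ∏ w : InfinitePlace K, max ((w x) ^ w.mult) 1 := by
              rw [← Finset.mul_prod_erase Finset.univ _ (Finset.mem_univ i.val)]
              exact le_mul_of_one_le_left
                (Finset.prod_nonneg fun w _ => hnn w) (hone i.val)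
          _ ≤ D := hH
      have : t⁻¹ = ∏ w ∈ Finset.univ.erase i.val, (w x) ^ w.mult := by
        field_simp at herase ⊢
        linarith [herase]
      rw [this]; exact h2
    have hcomp : logEmbedding K (Additive.ofMul u) i = Real.log t := by
      rw [logEmbedding_component, htdef, Real.log_pow]
    rw [hcomp, abs_le]
    constructor
    · have h3 : Real.log t⁻¹ ≤ Real.log D := Real.log_le_log (by positivity) htinv
      rw [Real.log_inv] at h3
      linarith
    · exact Real.log_le_log htpos htD
  refine ⟨m, ζ, hζ, hdecomp, S.mulVec (fun j => (m j : ℝ)), ?_, ?_⟩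
  · intro i
    rw [← congrFun hlog i]
    exact hbound i
  · rw [Matrix.mulVec_mulVec, Matrix.nonsing_inv_mul S hSdet, Matrix.one_mulVec]
end

section
/- Let K be a number field with unit rank r ≥ 1, fundamental units ε_1,…,ε_r, and let T be the inverse of the matrix S with columns Λ'(ε_j). If a unit u = ζ ε_1^{n_1} ⋯ ε_r^{n_r} (ζ ∈ μ_K, n_i ∈ Z) satisfies H_K(u) ≤ D for some D ≥ 1, then max_{1≤i≤r} |n_i| ≤ ⌊‖T‖ · √r · log D⌋, where ‖T‖ is the operator norm of T. -/
open NumberField IsDedekindDomain Real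
open scoped nonZeroDivisors Classical

variable (K : Type*) [Field K] [NumberField K]

open NumberField.Units NumberField.Units.dirichletUnitTheorem in
/-- `logEmbedding` applied to a product of integer powers. -/
theorem logEmbedding_prod_zpow
    (ε : {w : InfinitePlace K // w ≠ (w₀ : InfinitePlace K)} → (𝓞 K)ˣ)
    (n : {w : InfinitePlace K // w ≠ (w₀ : InfinitePlace K)} → ℤ)
    (s : Finset {w : InfinitePlace K // w ≠ (w₀ : InfinitePlace K)}) :
    logEmbedding K (Additive.ofMul (∏ i ∈ s, ε i ^ n i)) =
      ∑ i ∈ s, (n i) • logEmbedding K (Additive.ofMul (ε i)) := by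
  classical
  induction s using Finset.induction with
  | empty => simp
  | insert _ _ h ih =>
    rw [Finset.prod_insert h, Finset.sum_insert h, ofMul_mul, map_add, ofMul_zpow,
      map_zsmul, ih]

open NumberField.Units NumberField.Units.dirichletUnitTheorem in
theorem unit_exponents_le_floor
    (hr : 1 ≤ rank K)
    (ε : {w : InfinitePlace K // w ≠ (w₀ : InfinitePlace K)} → (𝓞 K)ˣ)
    (hfund : ∀ u : (𝓞 K)ˣ, ∃ ζ : (𝓞 K)ˣ,
      ∃ m : {w : InfinitePlace K // w ≠ (w₀ : InfinitePlace K)} → ℤ,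
      ζ ∈ torsion K ∧ u = ζ * ∏ i, ε i ^ m i)
    (S : Matrix {w : InfinitePlace K // w ≠ (w₀ : InfinitePlace K)}
      {w : InfinitePlace K // w ≠ (w₀ : InfinitePlace K)} ℝ)
    (hS : ∀ i j, S i j = logEmbedding K (Additive.ofMul (ε j)) i)
    (hSdet : IsUnit S.det)
    (D : ℝ) (hD : 1 ≤ D)
    (ζ : (𝓞 K)ˣ) (hζ : ζ ∈ torsion K)
    (n : {w : InfinitePlace K // w ≠ (w₀ : InfinitePlace K)} → ℤ)
    (u : (𝓞 K)ˣ) (hu : u = ζ * ∏ i, ε i ^ n i)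
    (hH : relHeight K (algebraMap (𝓞 K) K u) ≤ D) :
    ∀ i, |n i| ≤ ⌊‖Matrix.toEuclideanCLM (𝕜 := ℝ) S⁻¹‖ *
      Real.sqrt (rank K) * Real.log D⌋ := by
  classical
  intro i
  have hx0 : (algebraMap (𝓞 K) K (u : 𝓞 K)) ≠ 0 := by
    rw [← RingOfIntegers.coe_eq_algebraMap]
    exact coe_ne_zero u
  set x : K := algebraMap (𝓞 K) K (u : 𝓞 K) with hxdef
  have hwpos : ∀ w : InfinitePlace K, 0 < w x := fun w =>
    (AbsoluteValue.pos _ hx0)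
  set P : ℝ := ∏ w : InfinitePlace K, max (w x ^ w.mult) 1 with hPdef
  have hfac1 : ∀ w : InfinitePlace K, (1 : ℝ) ≤ max (w x ^ w.mult) 1 :=
    fun w => le_max_right _ _
  have hone : ∀ s : Finset (InfinitePlace K), (1:ℝ) ≤ ∏ w ∈ s, max (w x ^ w.mult) 1 := by
    intro s
    have := Finset.prod_le_prod (s := s) (f := fun _ => (1:ℝ))
      (g := fun w => max (w x ^ w.mult) 1) (fun _ _ => zero_le_one) (fun w _ => hfac1 w)
    simpa using this
  have hP1 : (1 : ℝ) ≤ P := hone Finset.univ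
  have hF1 : (1 : ℝ) ≤ ∏ᶠ v : HeightOneSpectrum (𝓞 K), max (vadicAbs K v x) 1 := by
    by_cases h : (Function.mulSupport fun v => max (vadicAbs K v x) 1).Finite
    · rw [finprod_eq_prod _ h]
      have := Finset.prod_le_prod (s := h.toFinset) (f := fun _ => (1:ℝ))
        (g := fun v => max (vadicAbs K v x) 1) (fun _ _ => zero_le_one)
        (fun v _ => le_max_right _ _)
      simpa using this
    · rw [finprod_of_infinite_mulSupport h]
  have hPD : P ≤ D := by
    calc P ≤ P * ∏ᶠ v : HeightOneSpectrum (𝓞 K), max (vadicAbs K v x) 1 :=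
          le_mul_of_one_le_right (by linarith) hF1
      _ = relHeight K x := rfl
      _ ≤ D := hH
  have hlogD : 0 ≤ Real.log D := Real.log_nonneg hD
  -- the product formula for the unit u
  have hprod : ∏ w : InfinitePlace K, w x ^ w.mult = 1 := by
    rw [hxdef, ← RingOfIntegers.coe_eq_algebraMap, InfinitePlace.prod_eq_abs_norm,
      Units.norm, Rat.cast_one]
  -- coordinate bound for the log embedding
  have hcoord : ∀ w : InfinitePlace K, |(w.mult : ℝ) * Real.log (w x)| ≤ Real.log D := by
    intro w
    have hle : ∀ w' : InfinitePlace K, w' x ^ w'.mult ≤ max (w' x ^ w'.mult) 1 :=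
      fun w' => le_max_left _ _
    have hsplit : P = max (w x ^ w.mult) 1 * ∏ w' ∈ Finset.univ.erase w, max (w' x ^ w'.mult) 1 :=
      (Finset.mul_prod_erase Finset.univ _ (Finset.mem_univ w)).symm
    have hupper : w x ^ w.mult ≤ P := by
      refine le_trans (hle w) ?_
      rw [hsplit]
      exact le_mul_of_one_le_right (le_trans zero_le_one (hfac1 w)) (hone _)
    have hlower : (w x ^ w.mult)⁻¹ ≤ P := by
      have h1 : w x ^ w.mult * ∏ w' ∈ Finset.univ.erase w, w' x ^ w'.mult = 1 := by
        rw [← Finset.mul_prod_erase Finset.univ _ (Finset.mem_univ w)] at hprod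
        exact hprod
      have hpow : (0:ℝ) < w x ^ w.mult := pow_pos (hwpos w) _
      have h2 : (w x ^ w.mult)⁻¹ = ∏ w' ∈ Finset.univ.erase w, w' x ^ w'.mult := by
        field_simp at h1 ⊢
        linarith [h1]
      rw [h2]
      calc ∏ w' ∈ Finset.univ.erase w, w' x ^ w'.mult
          ≤ ∏ w' ∈ Finset.univ.erase w, max (w' x ^ w'.mult) 1 :=
            Finset.prod_le_prod (fun w' _ => le_of_lt (pow_pos (hwpos w') _))
              (fun w' _ => hle w')
        _ ≤ P := by
              rw [hsplit]
              exact le_mul_of_one_le_left (le_trans zero_le_one (hone _)) (hfac1 w)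
    have heq : (w.mult : ℝ) * Real.log (w x) = Real.log (w x ^ w.mult) := by
      rw [Real.log_pow]
    rw [heq, abs_le]
    constructor
    · have := Real.log_le_log (inv_pos.mpr (pow_pos (hwpos w) _)) hlower
      rw [Real.log_inv] at this
      linarith [le_trans this (Real.log_le_log (by linarith) hPD)]
    · exact le_trans (Real.log_le_log (pow_pos (hwpos w) _) hupper)
        (Real.log_le_log (by linarith) hPD)
  -- relation between n and the log embedding of u
  have hcoe : ∀ w : InfinitePlace K, w ((u : 𝓞 K) : K) = w x := by
    intro w; rw [hxdef, RingOfIntegers.coe_eq_algebraMap]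
  have hLu : ∀ j : {w : InfinitePlace K // w ≠ (w₀ : InfinitePlace K)}, logEmbedding K (Additive.ofMul u) j
      = (j.val.mult : ℝ) * Real.log (j.val x) := by
    intro j
    rw [logEmbedding_component, hcoe]
  have hmul : S.mulVec (fun j => (n j : ℝ)) = logEmbedding K (Additive.ofMul u) := by
    have : logEmbedding K (Additive.ofMul u) =
        ∑ j : {w : InfinitePlace K // w ≠ (w₀ : InfinitePlace K)}, (n j) • logEmbedding K (Additive.ofMul (ε j)) := by
      rw [hu, ofMul_mul, map_add, (logEmbedding_eq_zero_iff).mpr hζ, zero_add,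
        logEmbedding_prod_zpow]
    funext k
    rw [this]
    simp only [Finset.sum_apply, Pi.smul_apply]
    simp only [Matrix.mulVec, dotProduct, hS, zsmul_eq_mul]
    exact Finset.sum_congr rfl fun j _ => mul_comm _ _
  set y : EuclideanSpace ℝ {w : InfinitePlace K // w ≠ (w₀ : InfinitePlace K)} :=
    (WithLp.equiv 2 ({w : InfinitePlace K // w ≠ (w₀ : InfinitePlace K)} → ℝ)).symm (logEmbedding K (Additive.ofMul u)) with hydef
  set T := Matrix.toEuclideanCLM (𝕜 := ℝ) S⁻¹ with hTdef
  have hTy : T y = (WithLp.equiv 2 ({w : InfinitePlace K // w ≠ (w₀ : InfinitePlace K)} → ℝ)).symm (fun j => (n j : ℝ)) := by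
    rw [hydef, WithLp.equiv_symm_apply, Matrix.toEuclideanCLM_toLp]
    congr 1
    rw [← hmul, Matrix.mulVec_mulVec, Matrix.nonsing_inv_mul S hSdet,
      Matrix.one_mulVec]
  -- card of the index type
  have hcard : Fintype.card {w : InfinitePlace K // w ≠ (w₀ : InfinitePlace K)} = rank K := by
    rw [rank]
    have : Fintype.card {w : InfinitePlace K // w = (w₀ : InfinitePlace K)} = 1 :=
      Fintype.card_subtype_eq _
    have h := Fintype.card_subtype_compl (fun w : InfinitePlace K => w = (w₀ : InfinitePlace K))
    simpa [this] using h
  -- norm of y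
  have hynorm : ‖y‖ ≤ Real.sqrt (rank K) * Real.log D := by
    rw [EuclideanSpace.norm_eq]
    have hsum : ∑ j : {w : InfinitePlace K // w ≠ (w₀ : InfinitePlace K)}, ‖y j‖ ^ 2 ≤ (rank K : ℝ) * (Real.log D) ^ 2 := by
      calc ∑ j : {w : InfinitePlace K // w ≠ (w₀ : InfinitePlace K)}, ‖y j‖ ^ 2 ≤ ∑ _j : {w : InfinitePlace K // w ≠ (w₀ : InfinitePlace K)}, (Real.log D) ^ 2 := by
            refine Finset.sum_le_sum fun j _ => ?_
            have hb : ‖y j‖ ≤ Real.log D := by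
              rw [Real.norm_eq_abs]
              have hyj : y j = logEmbedding K (Additive.ofMul u) j := rfl
              rw [hyj, hLu j]
              exact hcoord j.val
            exact pow_le_pow_left₀ (norm_nonneg _) hb 2
        _ = (rank K : ℝ) * (Real.log D) ^ 2 := by
            rw [Finset.sum_const, Finset.card_univ, hcard, nsmul_eq_mul]
    calc Real.sqrt (∑ j : {w : InfinitePlace K // w ≠ (w₀ : InfinitePlace K)}, ‖y j‖ ^ 2) ≤ Real.sqrt ((rank K : ℝ) * (Real.log D) ^ 2) :=
          Real.sqrt_le_sqrt hsum
      _ = Real.sqrt (rank K) * Real.log D := by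
          rw [Real.sqrt_mul (Nat.cast_nonneg _), Real.sqrt_sq hlogD]
  -- coordinate of T y
  have habs : ∀ z : EuclideanSpace ℝ {w : InfinitePlace K // w ≠ (w₀ : InfinitePlace K)},
      ∀ k, |z k| ≤ ‖z‖ := by
    intro z k
    rw [EuclideanSpace.norm_eq, ← Real.sqrt_sq_eq_abs]
    refine Real.sqrt_le_sqrt ?_
    simpa [Real.norm_eq_abs, sq_abs] using
      Finset.single_le_sum (f := fun j => ‖z j‖ ^ 2) (fun j _ => sq_nonneg _)
        (Finset.mem_univ k)
  have hcoordTy : |(n i : ℝ)| ≤ ‖T y‖ := by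
    have h := habs (T y) i
    have h2 : (T y) i = (n i : ℝ) := by rw [hTy]; rfl
    rwa [h2] at h
  have hfinal : (|n i| : ℝ) ≤ ‖T‖ * Real.sqrt (rank K) * Real.log D := by
    push_cast
    calc |(n i : ℝ)| ≤ ‖T y‖ := hcoordTy
      _ ≤ ‖T‖ * ‖y‖ := T.le_opNorm y
      _ ≤ ‖T‖ * (Real.sqrt (rank K) * Real.log D) :=
          mul_le_mul_of_nonneg_left hynorm (norm_nonneg _)
      _ = ‖T‖ * Real.sqrt (rank K) * Real.log D := by ring
  refine Int.le_floor.mpr ?_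
  push_cast
  exact hfinal
end

section
/- Let S be an invertible r×r real matrix, d > 0, η > 0, and set B = [−d,d]^r and B̃ = [−d−η, d+η]^r. Let m ≥ r² · max{‖S‖_sup, ‖S^{-1}‖_sup}, λ = η/(d r (1+m)), and δ = min{ λ/(r²(m² + mλ)), 1/r² }. If S̃ is any r×r matrix with ‖S̃ − S‖_sup < δ, then S̃ is invertible and S^{-1}(B) ⊆ S̃^{-1}(B̃). -/
open scoped Classical

/-- The Euclidean operator norm `‖L‖ = sup_{|x| ≤ 1} |Lx|` of a real `r × r` matrix. -/
noncomputable def opNorm {r : ℕ} (M : Matrix (Fin r) (Fin r) ℝ) : ℝ :=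
  ‖Matrix.toEuclideanCLM (𝕜 := ℝ) M‖

/-- The sup norm `max_{i,j} |L_{i,j}|` of a real `r × r` matrix. -/
noncomputable def supNorm {r : ℕ} (M : Matrix (Fin r) (Fin r) ℝ) : ℝ :=
  ⨆ i, ⨆ j, |M i j|

private lemma abs_entry_le_supNorm {r : ℕ} (M : Matrix (Fin r) (Fin r) ℝ) (i j : Fin r) :
    |M i j| ≤ supNorm M := by
  have h1 : |M i j| ≤ ⨆ k, |M i k| :=
    le_ciSup (f := fun k => |M i k|) (Set.Finite.bddAbove (Set.finite_range _)) j
  exact h1.trans (le_ciSup (f := fun i => ⨆ k, |M i k|)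
    (Set.Finite.bddAbove (Set.finite_range _)) i)

private lemma supNorm_nonneg_of {r : ℕ} (M : Matrix (Fin r) (Fin r) ℝ) (i : Fin r) :
    0 ≤ supNorm M :=
  (abs_nonneg _).trans (abs_entry_le_supNorm M i i)

attribute [local instance] Matrix.linftyOpNormedAddCommGroup Matrix.linftyOpNormedRing

@[local instance] noncomputable def matComplete {n : ℕ} :
    CompleteSpace (Matrix (Fin n) (Fin n) ℝ) :=
  letI : NormedSpace ℝ (Matrix (Fin n) (Fin n) ℝ) := Matrix.linftyOpNormedSpace
  FiniteDimensional.complete ℝ _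

private lemma linfty_norm_le {r : ℕ} (M : Matrix (Fin r) (Fin r) ℝ) {c : ℝ} (hc : 0 ≤ c)
    (hM : ∀ i j, |M i j| ≤ c) : ‖M‖ ≤ r * c := by
  rw [Matrix.linfty_opNorm_def]
  have hrc : (0 : ℝ) ≤ (r : ℝ) * c := by positivity
  have key : (Finset.univ.sup fun i : Fin r => ∑ j : Fin r, ‖M i j‖₊) ≤ ⟨(r : ℝ) * c, hrc⟩ := by
    refine Finset.sup_le fun i _ => ?_
    refine NNReal.coe_le_coe.mp ?_
    push_cast
    calc (∑ j : Fin r, ‖M i j‖) ≤ ∑ _j : Fin r, c := by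
          refine Finset.sum_le_sum fun j _ => ?_
          rw [Real.norm_eq_abs]; exact hM i j
      _ = (r : ℝ) * c := by simp [mul_comm]
  exact_mod_cast key

private lemma isUnit_one_add {n : ℕ} (E : Matrix (Fin n) (Fin n) ℝ) (hE : ‖E‖ < 1) :
    IsUnit (1 + E) := by
  have h : ‖-E‖ < 1 := by rwa [norm_neg]
  haveI : HasSummableGeomSeries (Matrix (Fin n) (Fin n) ℝ) :=
    @instHasSummableGeomSeriesOfCompleteSpace _ Matrix.linftyOpNormedRing matComplete
  have := (Units.oneSub (-E) h).isUnit
  rwa [Units.val_oneSub, sub_neg_eq_add] at this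

set_option maxHeartbeats 800000 in
theorem box_preimage_subset {r : ℕ} (S St : Matrix (Fin r) (Fin r) ℝ)
    (hS : IsUnit S.det) (d η : ℝ) (hd : 0 < d) (hη : 0 < η)
    (m : ℝ) (hm : (r : ℝ) ^ 2 * max (supNorm S) (supNorm S⁻¹) ≤ m)
    (lam δ : ℝ) (hlam : lam = η / (d * r * (1 + m)))
    (hδ : δ = min (lam / ((r : ℝ) ^ 2 * (m ^ 2 + m * lam))) (1 / (r : ℝ) ^ 2))
    (h : supNorm (St - S) < δ) :
    IsUnit St.det ∧
      ∀ x : Fin r → ℝ, (∀ i, |S.mulVec x i| ≤ d) → ∀ i, |St.mulVec x i| ≤ d + η := by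
  rcases Nat.eq_zero_or_pos r with hr | hr
  · subst hr
    exfalso
    have h0 : supNorm (St - S) = 0 := by
      simp [supNorm, Real.iSup_of_isEmpty]
    have hδ0 : δ = 0 := by
      rw [hδ]; norm_num
    rw [h0, hδ0] at h
    exact lt_irrefl 0 h
  -- Now r ≥ 1
  have hr1 : (1 : ℝ) ≤ (r : ℝ) := by exact_mod_cast hr
  have hrpos : (0 : ℝ) < (r : ℝ) := by linarith
  have hr2 : (1 : ℝ) ≤ (r : ℝ) ^ 2 := by nlinarith
  have hr3 : (1 : ℝ) ≤ (r : ℝ) ^ 3 := by nlinarith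
  set i0 : Fin r := ⟨0, hr⟩
  set sS := supNorm S with hsS_def
  set sI := supNorm S⁻¹ with hsI_def
  set ε := supNorm (St - S) with hε_def
  have hsS : 0 ≤ sS := supNorm_nonneg_of S i0
  have hsI : 0 ≤ sI := supNorm_nonneg_of S⁻¹ i0
  have hε0 : 0 ≤ ε := supNorm_nonneg_of (St - S) i0
  have hm2 : (r : ℝ) ^ 2 * sS ≤ m :=
    le_trans (mul_le_mul_of_nonneg_left (le_max_left sS sI) (by positivity)) hm
  have hm3 : (r : ℝ) ^ 2 * sI ≤ m :=
    le_trans (mul_le_mul_of_nonneg_left (le_max_right sS sI) (by positivity)) hm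
  have hm0 : 0 ≤ m := le_trans (by positivity) hm2
  -- one = S * S⁻¹ entrywise gives 1 ≤ r * (sS * sI)
  have hSI : S * S⁻¹ = 1 := Matrix.mul_nonsing_inv S hS
  have hone : (1 : ℝ) ≤ (r : ℝ) * (sS * sI) := by
    have h1 : (S * S⁻¹) i0 i0 = 1 := by rw [hSI]; simp
    have h2 : (S * S⁻¹) i0 i0 = ∑ k, S i0 k * S⁻¹ k i0 := Matrix.mul_apply
    have h3 : |∑ k, S i0 k * S⁻¹ k i0| ≤ ∑ k : Fin r, sS * sI := by
      refine (Finset.abs_sum_le_sum_abs _ _).trans (Finset.sum_le_sum fun k _ => ?_)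
      rw [abs_mul]
      exact mul_le_mul (abs_entry_le_supNorm S i0 k) (abs_entry_le_supNorm S⁻¹ k i0)
        (abs_nonneg _) hsS
    rw [← h2, h1] at h3
    simpa [mul_assoc] using h3
  have hm1 : (1 : ℝ) ≤ m := by
    have hA : (r : ℝ) ^ 2 * sS * ((r : ℝ) ^ 2 * sI) ≤ m * m :=
      mul_le_mul hm2 hm3 (by positivity) hm0
    have hB : (r : ℝ) ^ 3 * 1 ≤ (r : ℝ) ^ 3 * ((r : ℝ) * (sS * sI)) :=
      mul_le_mul_of_nonneg_left hone (by positivity)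
    have hC : (1 : ℝ) ≤ m * m := by nlinarith
    nlinarith
  have hlam_pos : 0 < lam := by
    rw [hlam]; positivity
  have hδ1 : δ ≤ lam / ((r : ℝ) ^ 2 * (m ^ 2 + m * lam)) := hδ ▸ min_le_left _ _
  have hδpos : 0 < δ := by
    rw [hδ]
    have h1 : (0 : ℝ) < lam / ((r : ℝ) ^ 2 * (m ^ 2 + m * lam)) := by positivity
    have h2 : (0 : ℝ) < 1 / (r : ℝ) ^ 2 := by positivity
    exact lt_min h1 h2
  have hdenom : (0 : ℝ) < (r : ℝ) ^ 2 * (m ^ 2 + m * lam) := by positivity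
  have hδmul : δ * ((r : ℝ) ^ 2 * (m ^ 2 + m * lam)) ≤ lam :=
    (le_div_iff₀ hdenom).mp hδ1
  -- key bound 1 : m * δ * r² ≤ 1
  have hkey1 : m * δ * (r : ℝ) ^ 2 ≤ 1 := by
    have hA : δ * ((r : ℝ) ^ 2 * (m * lam)) ≤ δ * ((r : ℝ) ^ 2 * (m ^ 2 + m * lam)) := by
      refine mul_le_mul_of_nonneg_left ?_ hδpos.le
      refine mul_le_mul_of_nonneg_left ?_ (by positivity)
      nlinarith
    have hB : m * δ * (r : ℝ) ^ 2 * lam ≤ 1 * lam := by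
      have heq : m * δ * (r : ℝ) ^ 2 * lam = δ * ((r : ℝ) ^ 2 * (m * lam)) := by ring
      rw [heq, one_mul]
      exact hA.trans hδmul
    exact le_of_mul_le_mul_right hB hlam_pos
  have hmδ : m * δ ≤ 1 := by
    have h1 : m * δ ≤ m * δ * (r : ℝ) ^ 2 := le_mul_of_one_le_right (by positivity) hr2
    linarith
  -- key bound 2 : m * d * δ ≤ η
  have hkey2 : m * d * δ ≤ η := by
    have hlam' : lam * (d * r * (1 + m)) = η := by
      rw [hlam]; field_simp
    have hK : m ≤ (r : ℝ) ^ 3 * ((1 + m) * (m ^ 2 + m * lam)) := by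
      have h1 : m ≤ m ^ 2 := by nlinarith
      have h2 : m ^ 2 ≤ (1 + m) * (m ^ 2 + m * lam) := by nlinarith
      have h3 : (1 + m) * (m ^ 2 + m * lam) ≤ (r : ℝ) ^ 3 * ((1 + m) * (m ^ 2 + m * lam)) :=
        le_mul_of_one_le_left (by positivity) hr3
      linarith
    have hdd : (0 : ℝ) ≤ δ * d := by positivity
    calc m * d * δ = (δ * d) * m := by ring
      _ ≤ (δ * d) * ((r : ℝ) ^ 3 * ((1 + m) * (m ^ 2 + m * lam))) :=
          mul_le_mul_of_nonneg_left hK hdd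
      _ = (δ * ((r : ℝ) ^ 2 * (m ^ 2 + m * lam))) * (d * r * (1 + m)) := by ring
      _ ≤ lam * (d * r * (1 + m)) := mul_le_mul_of_nonneg_right hδmul (by positivity)
      _ = η := hlam'
  constructor
  · -- invertibility of St
    set E := S⁻¹ * (St - S) with hE_def
    have hnormI : ‖S⁻¹‖ ≤ (r : ℝ) * (m / (r : ℝ) ^ 2) := by
      refine linfty_norm_le _ (by positivity) fun i j => ?_
      rw [le_div_iff₀ (by positivity)]
      calc |S⁻¹ i j| * (r : ℝ) ^ 2 ≤ sI * (r : ℝ) ^ 2 :=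
            mul_le_mul_of_nonneg_right (abs_entry_le_supNorm S⁻¹ i j) (by positivity)
        _ = (r : ℝ) ^ 2 * sI := by ring
        _ ≤ m := hm3
    have hnormD : ‖St - S‖ ≤ (r : ℝ) * ε :=
      linfty_norm_le _ hε0 fun i j => abs_entry_le_supNorm _ i j
    have hnormE : ‖E‖ < 1 := by
      have h1 : ‖E‖ ≤ ‖S⁻¹‖ * ‖St - S‖ := Matrix.linfty_opNorm_mul _ _
      have h2 : ‖S⁻¹‖ * ‖St - S‖ ≤ ((r : ℝ) * (m / (r : ℝ) ^ 2)) * ((r : ℝ) * ε) :=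
        mul_le_mul hnormI hnormD (norm_nonneg _) (by positivity)
      have h3 : ((r : ℝ) * (m / (r : ℝ) ^ 2)) * ((r : ℝ) * ε) = m * ε := by
        field_simp
      have h4 : m * ε < m * δ := mul_lt_mul_of_pos_left h (by linarith)
      calc ‖E‖ ≤ ‖S⁻¹‖ * ‖St - S‖ := h1
        _ ≤ _ := h2
        _ = m * ε := h3
        _ < m * δ := h4
        _ ≤ 1 := hmδ
    have hunit : IsUnit (1 + E) := isUnit_one_add E hnormE
    have hfact : St = S * (1 + E) := by
      rw [hE_def, mul_add, mul_one, ← mul_assoc, hSI, one_mul]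
      abel
    have hSunit : IsUnit S := (Matrix.isUnit_iff_isUnit_det S).mpr hS
    have : IsUnit St := hfact ▸ hSunit.mul hunit
    exact (Matrix.isUnit_iff_isUnit_det St).mp this
  · intro x hx i
    have hxeq : S⁻¹.mulVec (S.mulVec x) = x := by
      rw [Matrix.mulVec_mulVec, Matrix.nonsing_inv_mul S hS, Matrix.one_mulVec]
    have hxb : ∀ j, |x j| ≤ (r : ℝ) * (sI * d) := by
      intro j
      have h1 : x j = ∑ k, S⁻¹ j k * S.mulVec x k := by
        conv_lhs => rw [← hxeq]
        rfl
      rw [h1]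
      refine (Finset.abs_sum_le_sum_abs _ _).trans ?_
      calc (∑ k, |S⁻¹ j k * S.mulVec x k|) ≤ ∑ _k : Fin r, sI * d := by
            refine Finset.sum_le_sum fun k _ => ?_
            rw [abs_mul]
            exact mul_le_mul (abs_entry_le_supNorm S⁻¹ j k) (hx k) (abs_nonneg _) hsI
        _ = (r : ℝ) * (sI * d) := by simp [mul_comm]
    have hdiff : |(St - S).mulVec x i| ≤ m * ε * d := by
      have h1 : (St - S).mulVec x i = ∑ j, (St - S) i j * x j := rfl
      rw [h1]
      refine (Finset.abs_sum_le_sum_abs _ _).trans ?_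
      have h2 : (∑ j, |(St - S) i j * x j|) ≤ ∑ _j : Fin r, ε * ((r : ℝ) * (sI * d)) := by
        refine Finset.sum_le_sum fun j _ => ?_
        rw [abs_mul]
        exact mul_le_mul (abs_entry_le_supNorm _ i j) (hxb j) (abs_nonneg _) hε0
      refine h2.trans ?_
      have h3 : (∑ _j : Fin r, ε * ((r : ℝ) * (sI * d))) = (r : ℝ) ^ 2 * sI * (ε * d) := by
        simp [Finset.sum_const]
        ring
      rw [h3]
      calc (r : ℝ) ^ 2 * sI * (ε * d) ≤ m * (ε * d) :=
            mul_le_mul_of_nonneg_right hm3 (by positivity)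
        _ = m * ε * d := by ring
    have hsplit : St.mulVec x i = S.mulVec x i + (St - S).mulVec x i := by
      rw [Matrix.sub_mulVec]
      simp
    rw [hsplit]
    have h4 : m * ε * d ≤ η := by
      have h5 : m * ε * d ≤ m * δ * d :=
        mul_le_mul_of_nonneg_right (mul_le_mul_of_nonneg_left h.le (by linarith)) hd.le
      have h6 : m * δ * d = m * d * δ := by ring
      linarith
    calc |S.mulVec x i + (St - S).mulVec x i| ≤ |S.mulVec x i| + |(St - S).mulVec x i| :=
          abs_add_le _ _
      _ ≤ d + m * ε * d := add_le_add (hx i) hdiff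
      _ ≤ d + η := by linarith
end

section
/- Let K be a real quadratic field, σ the nontrivial element of Gal(K/Q), and x ∈ K^*. Then H_K(x) is rational if and only if max{|x|, |σ(x)|} ≤ 1 or min{|x|, |σ(x)|} ≥ 1; moreover, whenever H_K(x) is rational it is an integer. -/
open NumberField IsDedekindDomain Real
open scoped nonZeroDivisors Classical

variable (K : Type*) [Field K] [NumberField K]

namespace HeightAux

open IsDedekindDomain.HeightOneSpectrum

/-- The multiplicity of `v` in the factorization of the ideal generated by `r`. -/
noncomputable def cnt (v : HeightOneSpectrum (𝓞 K)) (r : 𝓞 K) : ℕ :=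
  (Associates.mk v.asIdeal).count (Associates.mk (Ideal.span {r} : Ideal (𝓞 K))).factors

variable {K}

lemma one_lt_absNorm (v : HeightOneSpectrum (𝓞 K)) : 1 < Ideal.absNorm v.asIdeal := by
  have h0 : Ideal.absNorm v.asIdeal ≠ 0 := by
    rw [Ne, Ideal.absNorm_eq_zero_iff]
    exact v.ne_bot
  have h1 : Ideal.absNorm v.asIdeal ≠ 1 := by
    rw [Ne, Ideal.absNorm_eq_one_iff]
    exact v.isPrime.ne_top
  omega

lemma support_finite {r : 𝓞 K} (hr : r ≠ 0) :
    {v : HeightOneSpectrum (𝓞 K) | cnt K v r ≠ 0}.Finite := by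
  have hspan : (Ideal.span {r} : Ideal (𝓞 K)) ≠ 0 := by
    simpa [Ne, Ideal.span_singleton_eq_bot] using hr
  refine (Ideal.finite_factors hspan).subset ?_
  intro v hv
  exact (Associates.count_ne_zero_iff_dvd hspan v.irreducible).mp hv

lemma absNorm_span_eq_prod {r : 𝓞 K} (hr : r ≠ 0) {S : Finset (HeightOneSpectrum (𝓞 K))}
    (hS : ∀ v, cnt K v r ≠ 0 → v ∈ S) :
    Ideal.absNorm (Ideal.span {r} : Ideal (𝓞 K)) =
      ∏ v ∈ S, Ideal.absNorm v.asIdeal ^ cnt K v r := by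
  have hspan : (Ideal.span {r} : Ideal (𝓞 K)) ≠ 0 := by
    simpa [Ne, Ideal.span_singleton_eq_bot] using hr
  conv_lhs => rw [← Ideal.finprod_heightOneSpectrum_factorization hspan]
  rw [finprod_eq_prod_of_mulSupport_subset _ (s := S) ?_]
  · rw [map_prod]
    refine Finset.prod_congr rfl fun v _ => ?_
    rw [IsDedekindDomain.HeightOneSpectrum.maxPowDividing, map_pow]
    rfl
  · intro v hv
    refine hS v fun h => hv ?_
    show v.maxPowDividing (Ideal.span {r}) = 1
    rw [IsDedekindDomain.HeightOneSpectrum.maxPowDividing,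
      show (Associates.mk v.asIdeal).count (Associates.mk (Ideal.span {r})).factors = 0 from h,
      pow_zero]

lemma max_vadic {a b : 𝓞 K} (ha : a ≠ 0) (hb : b ≠ 0) (hbm : b ∈ (𝓞 K)⁰) {x : K}
    (hxeq : algebraMap (𝓞 K) K a / algebraMap (𝓞 K) K b = x) (v : HeightOneSpectrum (𝓞 K)) :
    max (vadicAbs K v x) 1 = (Ideal.absNorm v.asIdeal : ℝ) ^ (cnt K v b - cnt K v a) := by
  have hval : v.valuation K x =
      ((Multiplicative.ofAdd ((cnt K v b : ℤ) - cnt K v a) : Multiplicative ℤ) :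
        WithZero (Multiplicative ℤ)) := by
    rw [← hxeq, ← IsFractionRing.mk'_eq_div (K := K) (r := a) ⟨b, hbm⟩, valuation_of_mk']
    show v.intValuationDef a / v.intValuationDef b = _
    rw [v.intValuationDef_if_neg ha, v.intValuationDef_if_neg hb, ← WithZero.exp_sub]
    exact congrArg Multiplicative.ofAdd (by simp only [cnt]; ring)
  have hne : ¬ v.valuation K x = 0 := by rw [hval]; exact WithZero.coe_ne_zero
  have hunz : WithZero.unzero hne = Multiplicative.ofAdd ((cnt K v b : ℤ) - cnt K v a) := by
    rw [← WithZero.coe_inj, WithZero.coe_unzero, hval]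
  rw [vadicAbs, dif_neg hne, hunz, toAdd_ofAdd]
  have hN : (1 : ℝ) < (Ideal.absNorm v.asIdeal : ℝ) := by
    exact_mod_cast one_lt_absNorm v
  rcases le_or_gt (cnt K v b) (cnt K v a) with h | h
  · have hd : ((cnt K v b : ℤ) - cnt K v a) ≤ 0 := by
      have := Int.ofNat_le.mpr h; omega
    have h1 : (Ideal.absNorm v.asIdeal : ℝ) ^ ((cnt K v b : ℤ) - cnt K v a) ≤ 1 := by
      calc (Ideal.absNorm v.asIdeal : ℝ) ^ ((cnt K v b : ℤ) - cnt K v a)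
          ≤ (Ideal.absNorm v.asIdeal : ℝ) ^ (0 : ℤ) :=
            zpow_le_zpow_right₀ hN.le hd
        _ = 1 := zpow_zero _
    rw [max_eq_right h1, Nat.sub_eq_zero_of_le h, pow_zero]
  · have hd : ((cnt K v b : ℤ) - cnt K v a) = ((cnt K v b - cnt K v a : ℕ) : ℤ) := by
      have := Int.ofNat_le.mpr h.le; omega
    have h1 : (1 : ℝ) ≤ (Ideal.absNorm v.asIdeal : ℝ) ^ ((cnt K v b : ℤ) - cnt K v a) := by
      calc (1 : ℝ) = (Ideal.absNorm v.asIdeal : ℝ) ^ (0 : ℤ) := (zpow_zero _).symm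
        _ ≤ _ := zpow_le_zpow_right₀ hN.le (by have := Int.ofNat_le.mpr h.le; omega)
    rw [max_eq_left h1, hd, zpow_natCast]

end HeightAux

theorem height_real_quadratic_rational_iff
    (h2 : Module.finrank ℚ K = 2)
    (hreal : ∀ w : InfinitePlace K, w.IsReal)
    (φ : K →+* ℝ) (σ : K ≃ₐ[ℚ] K) (hσ : σ ≠ AlgEquiv.refl)
    (x : K) (hx : x ≠ 0) :
    ((∃ q : ℚ, relHeight K x = q) ↔
      (max |φ x| |φ (σ x)| ≤ 1 ∨ 1 ≤ min |φ x| |φ (σ x)|)) ∧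
    ((∃ q : ℚ, relHeight K x = q) → ∃ m : ℤ, relHeight K x = m) := by
  classical
  obtain ⟨a, b, hbm, hx_eq⟩ := IsFractionRing.div_surjective (A := 𝓞 K) x
  have hb : b ≠ 0 := nonZeroDivisors.ne_zero hbm
  have ha : a ≠ 0 := by
    intro h
    apply hx
    rw [← hx_eq, h, map_zero, zero_div]
  -- the common support
  set S : Finset (HeightOneSpectrum (𝓞 K)) :=
    ((HeightAux.support_finite ha).union (HeightAux.support_finite hb)).toFinset with hS_def
  have hSa : ∀ v, HeightAux.cnt K v a ≠ 0 → v ∈ S := by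
    intro v hv; rw [hS_def, Set.Finite.mem_toFinset]; exact Or.inl hv
  have hSb : ∀ v, HeightAux.cnt K v b ≠ 0 → v ∈ S := by
    intro v hv; rw [hS_def, Set.Finite.mem_toFinset]; exact Or.inr hv
  set n₁ : ℕ := ∏ v ∈ S, Ideal.absNorm v.asIdeal ^ (HeightAux.cnt K v b - HeightAux.cnt K v a)
    with hn₁_def
  set n₂ : ℕ := ∏ v ∈ S, Ideal.absNorm v.asIdeal ^ (HeightAux.cnt K v a - HeightAux.cnt K v b)
    with hn₂_def
  set Na : ℕ := Ideal.absNorm (Ideal.span {a} : Ideal (𝓞 K)) with hNa_def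
  set Nb : ℕ := Ideal.absNorm (Ideal.span {b} : Ideal (𝓞 K)) with hNb_def
  -- the finite part of the height
  have hfin : (∏ᶠ v : HeightOneSpectrum (𝓞 K), max (vadicAbs K v x) 1) = (n₁ : ℝ) := by
    rw [finprod_eq_prod_of_mulSupport_subset _ (s := S) ?_]
    · rw [hn₁_def]
      push_cast
      exact Finset.prod_congr rfl fun v _ => HeightAux.max_vadic ha hb hbm hx_eq v
    · intro v hv
      by_contra hvS
      apply hv
      have hca : HeightAux.cnt K v a = 0 := by
        by_contra h; exact hvS (hSa v h)
      have hcb : HeightAux.cnt K v b = 0 := by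
        by_contra h; exact hvS (hSb v h)
      show max (vadicAbs K v x) 1 = 1
      rw [HeightAux.max_vadic ha hb hbm hx_eq v, hca, hcb, pow_zero]
  -- key integrality identity
  have hkey : n₁ * Na = n₂ * Nb := by
    rw [hn₁_def, hn₂_def, hNa_def, hNb_def, HeightAux.absNorm_span_eq_prod ha hSa,
      HeightAux.absNorm_span_eq_prod hb hSb, ← Finset.prod_mul_distrib,
      ← Finset.prod_mul_distrib]
    refine Finset.prod_congr rfl fun v _ => ?_
    rw [← pow_add, ← pow_add]
    congr 1
    omega
  have hn₁pos : 0 < n₁ := by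
    refine Finset.prod_pos fun v _ => pow_pos ?_ _
    have := HeightAux.one_lt_absNorm v; omega
  have hNbpos : 0 < Nb := by
    rw [hNb_def, Ideal.absNorm_span_singleton]
    have : Algebra.norm ℤ b ≠ 0 := by
      rw [Algebra.norm_ne_zero_iff]; exact hb
    omega
  -- infinite places
  set ψ₁ : K →+* ℂ := Complex.ofRealHom.comp φ with hψ₁_def
  set ψ₂ : K →+* ℂ := ψ₁.comp σ.toAlgHom.toRingHom with hψ₂_def
  have hφinj : Function.Injective φ := φ.injective
  have hψne : ψ₁ ≠ ψ₂ := by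
    intro h
    apply hσ
    ext y
    have h2 : (↑(φ y) : ℂ) = ↑(φ (σ y)) := by
      show ψ₁ y = ψ₂ y
      rw [h]
    exact (hφinj (Complex.ofReal_inj.mp h2)).symm
  have hψ₁real : ComplexEmbedding.IsReal ψ₁ := by
    rw [ComplexEmbedding.isReal_iff]
    ext y
    exact Complex.conj_ofReal (φ y)
  have hcard : Fintype.card (K →+* ℂ) = 2 := by
    rw [NumberField.Embeddings.card K ℂ, h2]
  have hall : ∀ ρ : K →+* ℂ, ρ = ψ₁ ∨ ρ = ψ₂ := by
    have huniv : ({ψ₁, ψ₂} : Finset (K →+* ℂ)) = Finset.univ := by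
      apply Finset.eq_univ_of_card
      rw [Finset.card_pair hψne, hcard]
    intro ρ
    have : ρ ∈ ({ψ₁, ψ₂} : Finset (K →+* ℂ)) := by rw [huniv]; exact Finset.mem_univ ρ
    simpa using this
  set w₁ : InfinitePlace K := NumberField.InfinitePlace.mk ψ₁ with hw₁_def
  set w₂ : InfinitePlace K := NumberField.InfinitePlace.mk ψ₂ with hw₂_def
  have hw12 : w₁ ≠ w₂ := by
    intro h
    rcases NumberField.InfinitePlace.mk_eq_iff.mp h with h' | h'
    · exact hψne h'
    · apply hψne
      rw [← ComplexEmbedding.isReal_iff.mp hψ₁real]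
      exact h'
  have huniv : (Finset.univ : Finset (InfinitePlace K)) = {w₁, w₂} := by
    symm
    apply Finset.eq_univ_iff_forall.mpr
    intro w
    rcases hall w.embedding with h | h
    · have : w = w₁ := by rw [← NumberField.InfinitePlace.mk_embedding w, h]
      simp [this]
    · have : w = w₂ := by rw [← NumberField.InfinitePlace.mk_embedding w, h]
      simp [this]
  set A : ℝ := |φ x| with hA_def
  set B : ℝ := |φ (σ x)| with hB_def
  have hw₁x : w₁ x = A := by
    rw [hw₁_def, NumberField.InfinitePlace.apply]
    exact Complex.norm_real (φ x)
  have hw₂x : w₂ x = B := by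
    rw [hw₂_def, NumberField.InfinitePlace.apply]
    exact Complex.norm_real (φ (σ x))
  have hmult : ∀ w : InfinitePlace K, w.mult = 1 := by
    intro w
    simp [NumberField.InfinitePlace.mult, hreal w]
  have hinf : (∏ w : InfinitePlace K, max (w x ^ w.mult) 1) = max A 1 * max B 1 := by
    rw [huniv, Finset.prod_pair hw12, hmult w₁, hmult w₂, pow_one, pow_one, hw₁x, hw₂x]
  set Q : ℚ := |Algebra.norm ℚ x| with hQ_def
  have hABQ : A * B = (Q : ℝ) := by
    have hpf := NumberField.InfinitePlace.prod_eq_abs_norm x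
    rw [huniv, Finset.prod_pair hw12, hmult w₁, hmult w₂, pow_one, pow_one, hw₁x, hw₂x] at hpf
    rw [hQ_def]
    exact hpf
  have hmapb : algebraMap (𝓞 K) K b ≠ 0 := by
    simpa using (map_ne_zero_iff _ (IsFractionRing.injective (𝓞 K) K)).mpr hb
  have hQNb : Q * (Nb : ℚ) = (Na : ℚ) := by
    have hxb : x * algebraMap (𝓞 K) K b = algebraMap (𝓞 K) K a := by
      rw [← hx_eq, div_mul_cancel₀ _ hmapb]
    have hnorm : Algebra.norm ℚ x * Algebra.norm ℚ (algebraMap (𝓞 K) K b)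
        = Algebra.norm ℚ (algebraMap (𝓞 K) K a) := by
      rw [← map_mul, hxb]
    have hna : (Na : ℚ) = |Algebra.norm ℚ (algebraMap (𝓞 K) K a)| := by
      rw [hNa_def, Ideal.absNorm_span_singleton, Nat.cast_natAbs, Int.cast_abs]
      congr 1
      exact Algebra.coe_norm_int a
    have hnb : (Nb : ℚ) = |Algebra.norm ℚ (algebraMap (𝓞 K) K b)| := by
      rw [hNb_def, Ideal.absNorm_span_singleton, Nat.cast_natAbs, Int.cast_abs]
      congr 1
      exact Algebra.coe_norm_int b
    rw [hna, hnb, hQ_def, ← abs_mul, hnorm]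
  -- height in terms of the data
  have hH : relHeight K x = max A 1 * max B 1 * (n₁ : ℝ) := by
    rw [relHeight, hinf, hfin]
  have hcase1 : max A B ≤ 1 → relHeight K x = (n₁ : ℝ) := by
    intro h
    rw [hH, max_eq_right (le_trans (le_max_left A B) h),
      max_eq_right (le_trans (le_max_right A B) h), one_mul, one_mul]
  have hcase2 : 1 ≤ min A B → relHeight K x = (n₂ : ℝ) := by
    intro h
    have hA1 : 1 ≤ A := le_trans h (min_le_left _ _)
    have hB1 : 1 ≤ B := le_trans h (min_le_right _ _)
    have hNbne : (Nb : ℚ) ≠ 0 := by exact_mod_cast hNbpos.ne'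
    have hqq : Q * (n₁ : ℚ) = (n₂ : ℚ) := by
      have h1 : (n₁ : ℚ) * Na = (n₂ : ℚ) * Nb := by exact_mod_cast hkey
      apply mul_right_cancel₀ hNbne
      calc Q * (n₁ : ℚ) * Nb = (n₁ : ℚ) * (Q * Nb) := by ring
        _ = (n₁ : ℚ) * Na := by rw [hQNb]
        _ = (n₂ : ℚ) * Nb := h1
    rw [hH, max_eq_left hA1, max_eq_left hB1]
    calc A * B * (n₁ : ℝ) = (Q : ℝ) * (n₁ : ℝ) := by rw [hABQ]
      _ = ((Q * (n₁ : ℚ) : ℚ) : ℝ) := by push_cast; ring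
      _ = (n₂ : ℝ) := by rw [hqq]; push_cast; ring
  -- rationality of an archimedean absolute value forces x ∈ ℚ
  have hrat_imp : ∀ r : ℚ, (A = (r : ℝ) ∨ B = (r : ℝ)) → A = B := by
    intro r hr
    have key : ∀ y : K, |φ y| = (r : ℝ) → ∃ s : ℚ, y = (s : K) := by
      intro y hy
      have hr0 : (0 : ℝ) ≤ (r : ℝ) := hy ▸ abs_nonneg _
      rcases (abs_eq hr0).mp hy with h | h
      · exact ⟨r, hφinj (by rw [h, map_ratCast])⟩
      · refine ⟨-r, hφinj ?_⟩
        rw [h, map_ratCast]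
        push_cast
        ring
    have hxs : ∃ s : ℚ, x = (s : K) := by
      rcases hr with h | h
      · exact key x h
      · obtain ⟨s, hs⟩ := key (σ x) h
        refine ⟨s, ?_⟩
        have := congrArg σ.symm hs
        rwa [AlgEquiv.symm_apply_apply, map_ratCast] at this
    obtain ⟨s, hs⟩ := hxs
    have hfix : σ x = x := by rw [hs, map_ratCast]
    simp only [hA_def, hB_def, hfix]
  have hn₁Rne : ((n₁ : ℝ)) ≠ 0 := by
    have : (0 : ℝ) < (n₁ : ℝ) := by exact_mod_cast hn₁pos
    exact this.ne'
  -- rational height implies the condition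
  have hmp : (∃ q : ℚ, relHeight K x = q) → (max A B ≤ 1 ∨ 1 ≤ min A B) := by
    rintro ⟨q, hq⟩
    by_contra hc
    push_neg at hc
    obtain ⟨hmax, hmin⟩ := hc
    have hABne : A ≠ B := by
      intro h
      rw [h, max_self] at hmax
      rw [h, min_self] at hmin
      exact absurd (hmax.trans hmin) (lt_irrefl _)
    rcases le_total A B with hle | hle
    · have hBgt : 1 < B := by rwa [max_eq_right hle] at hmax
      have hAlt : A < 1 := by rwa [min_eq_left hle] at hmin
      have hHB : relHeight K x = B * (n₁ : ℝ) := by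
        rw [hH, max_eq_right hAlt.le, max_eq_left hBgt.le, one_mul]
      have hB' : B = ((q / (n₁ : ℚ) : ℚ) : ℝ) := by
        rw [hHB] at hq
        push_cast
        rw [eq_div_iff hn₁Rne]
        exact hq
      exact hABne (hrat_imp _ (Or.inr hB'))
    · have hAgt : 1 < A := by rwa [max_eq_left hle] at hmax
      have hBlt : B < 1 := by rwa [min_eq_right hle] at hmin
      have hHA : relHeight K x = A * (n₁ : ℝ) := by
        rw [hH, max_eq_left hAgt.le, max_eq_right hBlt.le, mul_one]
      have hA' : A = ((q / (n₁ : ℚ) : ℚ) : ℝ) := by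
        rw [hHA] at hq
        push_cast
        rw [eq_div_iff hn₁Rne]
        exact hq
      exact hABne (hrat_imp _ (Or.inl hA'))
  constructor
  · constructor
    · exact hmp
    · rintro (h | h)
      · exact ⟨n₁, by rw [hcase1 h]; push_cast; ring⟩
      · exact ⟨n₂, by rw [hcase2 h]; push_cast; ring⟩
  · intro hq
    rcases hmp hq with h | h
    · exact ⟨n₁, by rw [hcase1 h]; push_cast; ring⟩
    · exact ⟨n₂, by rw [hcase2 h]; push_cast; ring⟩
end

section
/- Let K be a number field of degree n over Q and B ≥ 1 a real number. Let ω_1,…,ω_n be an LLL-reduced integral basis for O_K (with respect to the Minkowski embedding Φ). Then every x ∈ K with H_K(x) ≤ B can be written as x = (a_1 ω_1 + ⋯ + a_n ω_n)/c, where a_1,…,a_n, c are integers satisfying 1 ≤ c ≤ B and |a_i| ≤ 2^{n(n−1)/4} B c for all i. -/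
open NumberField IsDedekindDomain Real
open scoped nonZeroDivisors Classical

variable (K : Type*) [Field K] [NumberField K]

/-- The norm of the Minkowski embedding
`Φ(x) = (σ₁ x, …, σ_{r₁} x, √2 Re τ₁ x, √2 Im τ₁ x, …)`; it equals
`√(∑_{φ : K →+* ℂ} |φ x|²)`. -/
noncomputable def minkowskiNorm (x : K) : ℝ :=
  Real.sqrt (∑ φ : K →+* ℂ, ‖φ x‖ ^ 2)

section Aux

open IsDedekindDomain.HeightOneSpectrum


lemma unitary_abs_det {ι : Type*} [Fintype ι] [DecidableEq ι] {A : Matrix ι ι ℂ}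
    (hA : A ∈ Matrix.unitaryGroup ι ℂ) : ‖A.det‖ = 1 := by
  have h := Matrix.det_of_mem_unitary hA
  have h2 : (starRingEnd ℂ) A.det * A.det = 1 := h.1
  have := congrArg Norm.norm h2
  rw [norm_mul, norm_one, Complex.norm_conj] at this
  nlinarith [norm_nonneg A.det]

lemma hadamardIneq {ι : Type*} [Fintype ι] [DecidableEq ι] [LinearOrder ι]
    [LocallyFiniteOrderBot ι] [WellFoundedLT ι] (A : Matrix ι ι ℂ) :
    ‖A.det‖ ≤ ∏ j, Real.sqrt (∑ i, ‖A i j‖ ^ 2) := by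
  classical
  set f : ι → EuclideanSpace ℂ ι := fun j => (WithLp.equiv 2 (ι → ℂ)).symm (fun i => A i j) with hf
  have hnorm : ∀ j, ‖f j‖ = Real.sqrt (∑ i, ‖A i j‖ ^ 2) := by
    intro j
    rw [EuclideanSpace.norm_eq]
    congr 1
  have hcard : Module.finrank ℂ (EuclideanSpace ℂ ι) = Fintype.card ι := finrank_euclideanSpace
  set B := InnerProductSpace.gramSchmidtOrthonormalBasis hcard f with hB
  have hdet : B.toBasis.det f = ∏ i, (inner ℂ (B i) (f i) : ℂ) :=
    InnerProductSpace.gramSchmidtOrthonormalBasis_det hcard f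
  set b₀ := EuclideanSpace.basisFun ι ℂ with hb₀
  have hA0 : b₀.toBasis.toMatrix f = A := by
    ext i j
    simp [Module.Basis.toMatrix_apply, hf, b₀]
  have hmul : b₀.toBasis.toMatrix (B.toBasis) * B.toBasis.toMatrix f = A := by
    rw [Module.Basis.toMatrix_mul_toMatrix, hA0]
  have habs : ‖A.det‖ = ‖B.toBasis.det f‖ := by
    rw [← hmul, Matrix.det_mul, norm_mul, OrthonormalBasis.coe_toBasis,
      unitary_abs_det (OrthonormalBasis.toMatrix_orthonormalBasis_mem_unitary b₀ B), one_mul,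
      Module.Basis.det_apply]
  rw [habs, hdet, norm_prod]
  apply Finset.prod_le_prod (fun i _ => norm_nonneg _)
  intro i _
  rw [← hnorm i]
  calc ‖(inner ℂ (B i) (f i) : ℂ)‖ = ‖(inner ℂ (B i) (f i) : ℂ)‖ := rfl
  _ ≤ ‖B i‖ * ‖f i‖ := norm_inner_le_norm _ _
  _ = ‖f i‖ := by rw [B.orthonormal.1 i, one_mul]



lemma lt_one_le_ofAdd_neg_one {a : WithZero (Multiplicative ℤ)} (h : a < 1) :
    a ≤ ((Multiplicative.ofAdd (-1 : ℤ) : Multiplicative ℤ) : WithZero (Multiplicative ℤ)) := by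
  rcases eq_or_ne a 0 with rfl | ha
  · exact zero_le'
  · rw [← WithZero.coe_unzero ha] at h ⊢
    rw [← WithZero.coe_one, WithZero.coe_lt_coe] at h
    rw [WithZero.coe_le_coe]
    have : Multiplicative.toAdd (WithZero.unzero ha) < 0 := h
    have h2 : Multiplicative.toAdd (WithZero.unzero ha) ≤ -1 := by omega
    exact h2


lemma Associates.le_of_count_le' {α : Type*} [CommMonoidWithZero α]
    [UniqueFactorizationMonoid α] {a b : Associates α} (ha : a ≠ 0) (hb : b ≠ 0)
    (h : ∀ p : Associates α, Irreducible p → p.count a.factors ≤ p.count b.factors) : a ≤ b := by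
  classical
  rw [← Associates.factors_le]
  obtain ⟨sa, h_sa⟩ := Associates.factors_eq_some_iff_ne_zero.mpr ha
  obtain ⟨sb, h_sb⟩ := Associates.factors_eq_some_iff_ne_zero.mpr hb
  rw [h_sa, h_sb]
  rw [WithTop.coe_le_coe]
  rw [Multiset.le_iff_count]
  rintro ⟨p, hp⟩
  have := h p hp
  rw [h_sa, h_sb, Associates.count_some hp, Associates.count_some hp] at this
  exact this

lemma exists_int_of_val_le_one {R : Type*} [CommRing R] [IsDedekindDomain R]
    {K : Type*} [Field K] [Algebra R K] [IsFractionRing R K] (x : K)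
    (h : ∀ v : HeightOneSpectrum R, v.valuation K x ≤ 1) :
    ∃ y : R, algebraMap R K y = x := by
  obtain ⟨r, s, hs, hx⟩ := IsFractionRing.div_surjective (A := R) x
  have hs0 : s ≠ 0 := nonZeroDivisors.ne_zero hs
  by_cases hr0 : r = 0
  · exact ⟨0, by rw [map_zero]; rw [← hx, hr0, map_zero, zero_div]⟩
  have hdvd : s ∣ r := by
    have key : Ideal.span {s} ∣ Ideal.span ({r} : Set R) := by
      rw [← Associates.mk_le_mk_iff_dvd]
      apply Associates.le_of_count_le'
      · rw [Associates.mk_ne_zero, ne_eq, Submodule.zero_eq_bot, Ideal.span_singleton_eq_bot]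
        exact hs0
      · rw [Associates.mk_ne_zero, ne_eq, Submodule.zero_eq_bot, Ideal.span_singleton_eq_bot]
        exact hr0
      intro p hp
      obtain ⟨J, rfl⟩ := Associates.mk_surjective p
      rw [Associates.irreducible_mk] at hp
      have hJp : Prime J := UniqueFactorizationMonoid.irreducible_iff_prime.mp hp
      set v : HeightOneSpectrum R := ⟨J, Ideal.isPrime_of_prime hJp, hJp.ne_zero⟩ with hv
      have hval : v.valuation K x = v.intValuationDef r / v.intValuationDef s := by
        rw [← hx, map_div₀, valuation_of_algebraMap, valuation_of_algebraMap, intValuation_apply,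
          intValuation_apply]
      have h1 : v.intValuationDef r ≤ v.intValuationDef s := by
        have hspos : (0 : WithZero (Multiplicative ℤ)) < v.intValuationDef s :=
          v.intValuation_zero_lt ⟨s, hs⟩
        have := h v
        rw [hval, div_le_one₀ hspos] at this
        exact this
      rw [v.intValuationDef_if_neg hr0, v.intValuationDef_if_neg hs0] at h1
      unfold WithZero.exp at h1
      rw [WithZero.coe_le_coe, Multiplicative.ofAdd_le, neg_le_neg_iff, Int.ofNat_le] at h1
      convert h1
    exact Ideal.mem_span_singleton.mp (Ideal.dvd_iff_le.mp key (Ideal.mem_span_singleton.mpr dvd_rfl))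
  obtain ⟨t, rfl⟩ := hdvd
  refine ⟨t, ?_⟩
  rw [← hx, map_mul]
  have : algebraMap R K s ≠ 0 := fun hc => hs0 (IsFractionRing.to_map_eq_zero_iff.mp hc)
  field_simp

lemma one_le_absNorm (v : HeightOneSpectrum (𝓞 K)) : 1 ≤ Ideal.absNorm v.asIdeal := by
  rcases Nat.eq_zero_or_pos (Ideal.absNorm v.asIdeal) with h | h
  · exact absurd (Ideal.absNorm_eq_zero_iff.mp h) v.ne_bot
  · exact h

lemma denom_lemma (x : K) :
    ∃ c : ℕ, 0 < c ∧
      ((c : ℝ) ≤ ∏ᶠ v : HeightOneSpectrum (𝓞 K), max (vadicAbs K v x) 1) ∧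
      (1 ≤ ∏ᶠ v : HeightOneSpectrum (𝓞 K), max (vadicAbs K v x) 1) ∧
      ∃ y : 𝓞 K, (y : K) = (c : K) * x := by
  by_cases hx0 : x = 0
  · have h1 : ∀ v : HeightOneSpectrum (𝓞 K), max (vadicAbs K v x) 1 = 1 := by
      intro v
      have : v.valuation K x = 0 := by rw [hx0, map_zero]
      rw [vadicAbs, dif_pos this]
      simp
    have hfin := finprod_eq_one_of_forall_eq_one h1
    exact ⟨1, one_pos, by rw [hfin]; norm_num, by rw [hfin], 0, by simp [hx0]⟩
  -- x ≠ 0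
  have hvne : ∀ v : HeightOneSpectrum (𝓞 K), v.valuation K x ≠ 0 :=
    fun v => (Valuation.ne_zero_iff _).mpr hx0
  set t : HeightOneSpectrum (𝓞 K) → ℤ :=
    fun v => Multiplicative.toAdd (WithZero.unzero (hvne v)) with ht
  have habs_eq : ∀ v, vadicAbs K v x = (Ideal.absNorm v.asIdeal : ℝ) ^ (t v) := by
    intro v
    rw [vadicAbs, dif_neg (hvne v)]
  have hvalx : ∀ v, v.valuation K x =
      ((Multiplicative.ofAdd (t v) : Multiplicative ℤ) : WithZero (Multiplicative ℤ)) := by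
    intro v
    rw [ht]
    simp only [ofAdd_toAdd, WithZero.coe_unzero]
  have hN1 : ∀ v : HeightOneSpectrum (𝓞 K), (1:ℝ) ≤ (Ideal.absNorm v.asIdeal : ℝ) := by
    intro v; exact_mod_cast one_le_absNorm K v
  have hle_of_t : ∀ v, t v ≤ 0 → max (vadicAbs K v x) 1 = 1 := by
    intro v hv
    rw [max_eq_right]
    rw [habs_eq]
    exact zpow_le_one_of_nonpos₀ (hN1 v) hv
  have ht_of_le : ∀ v, v.valuation K x ≤ 1 → t v ≤ 0 := by
    intro v hv
    rw [hvalx v, ← WithZero.coe_one, WithZero.coe_le_coe] at hv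
    exact hv
  -- the denominator
  obtain ⟨r, s, hs, hxrs⟩ := IsFractionRing.div_surjective (A := 𝓞 K) x
  have hs0 : s ≠ 0 := nonZeroDivisors.ne_zero hs
  have hspan : (Ideal.span {s} : Ideal (𝓞 K)) ≠ 0 := by
    rw [ne_eq, Submodule.zero_eq_bot, Ideal.span_singleton_eq_bot]; exact hs0
  have hSfin : {v : HeightOneSpectrum (𝓞 K) | v.asIdeal ∣ Ideal.span {s}}.Finite :=
    Ideal.finite_factors hspan
  set F := hSfin.toFinset with hF
  have hxval : ∀ v : HeightOneSpectrum (𝓞 K),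
      v.valuation K x = v.intValuationDef r / v.intValuationDef s := by
    intro v
    rw [← hxrs, map_div₀, valuation_of_algebraMap, valuation_of_algebraMap, intValuation_apply,
        intValuation_apply]
  have hout : ∀ v : HeightOneSpectrum (𝓞 K), v ∉ F → v.valuation K x ≤ 1 := by
    intro v hv
    rw [hF, Set.Finite.mem_toFinset, Set.mem_setOf_eq] at hv
    have hs1 : v.intValuationDef s = 1 := by
      have hle := v.intValuation_le_one s
      have hnlt : ¬ v.intValuationDef s < 1 := fun hlt =>
        hv ((v.intValuation_lt_one_iff_dvd s).mp hlt)
      exact le_antisymm hle (not_lt.mp hnlt)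
    rw [hxval v, hs1, div_one]
    exact v.intValuation_le_one r
  have hsupp : Function.mulSupport (fun v => max (vadicAbs K v x) 1) ⊆ (F : Set _) := by
    intro v hv
    by_contra hvF
    exact hv (hle_of_t v (ht_of_le v (hout v hvF)))
  have hfin_eq : (∏ᶠ v : HeightOneSpectrum (𝓞 K), max (vadicAbs K v x) 1) =
      ∏ v ∈ F, max (vadicAbs K v x) 1 := finprod_eq_prod_of_mulSupport_subset _ hsupp
  have hone_le_fin : (1:ℝ) ≤ ∏ᶠ v : HeightOneSpectrum (𝓞 K), max (vadicAbs K v x) 1 := by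
    rw [hfin_eq]
    calc (1:ℝ) = ∏ _v ∈ F, 1 := by simp
    _ ≤ ∏ v ∈ F, max (vadicAbs K v x) 1 :=
        Finset.prod_le_prod (fun _ _ => zero_le_one) (fun v _ => le_max_right _ _)
  set m : HeightOneSpectrum (𝓞 K) → ℕ :=
    fun v => if 0 < t v then (Ideal.absNorm v.asIdeal) ^ (t v).toNat else 1 with hm
  set c : ℕ := ∏ v ∈ F, m v with hc
  have hmpos : ∀ v, 0 < m v := by
    intro v
    by_cases hvt : 0 < t v
    · simp only [hm, if_pos hvt]
      exact Nat.pow_pos (one_le_absNorm K v)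
    · simp only [hm, if_neg hvt]
      exact one_pos
  have hcpos : 0 < c := Finset.prod_pos fun v _ => hmpos v
  have hcle : (c : ℝ) ≤ ∏ᶠ v : HeightOneSpectrum (𝓞 K), max (vadicAbs K v x) 1 := by
    rw [hfin_eq, hc, Nat.cast_prod]
    apply Finset.prod_le_prod (fun v _ => by positivity)
    intro v _
    by_cases hvt : 0 < t v
    · simp only [hm, if_pos hvt]
      rw [le_max_iff]
      left
      rw [habs_eq]
      push_cast
      rw [← zpow_natCast, Int.toNat_of_nonneg (le_of_lt hvt)]
    · simp only [hm, if_neg hvt]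
      simp
  refine ⟨c, hcpos, hcle, hone_le_fin, ?_⟩
  -- integrality of c * x
  have hval_le : ∀ v : HeightOneSpectrum (𝓞 K), v.valuation K ((c:K) * x) ≤ 1 := by
    intro v
    have hcK : ((c:ℕ) : K) = algebraMap (𝓞 K) K ((c:ℕ) : 𝓞 K) := by
      rw [map_natCast]
    rw [map_mul, hcK, valuation_of_algebraMap]
    by_cases hvt : 0 < t v
    · have hvF : v ∈ F := by
        rw [hF, Set.Finite.mem_toFinset, Set.mem_setOf_eq]
        by_contra hvn
        have := ht_of_le v (hout v
          (by simp only [hF, Set.Finite.mem_toFinset, Set.mem_setOf_eq]; exact hvn))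
        omega
      have hdvd : ((m v : ℕ) : 𝓞 K) ∣ ((c:ℕ) : 𝓞 K) :=
        Nat.cast_dvd_cast (Finset.dvd_prod_of_mem m hvF)
      have hmono : v.intValuation ((c:ℕ) : 𝓞 K) ≤ v.intValuation ((m v : ℕ) : 𝓞 K) := by
        obtain ⟨k, hk⟩ := hdvd
        rw [hk, map_mul]
        exact mul_le_of_le_one_right' (v.intValuation_le_one k)
      have hNlt : v.intValuation ((Ideal.absNorm v.asIdeal : ℕ) : 𝓞 K) < 1 := by
        apply (v.intValuation_lt_one_iff_dvd _).mpr
        rw [Ideal.dvd_span_singleton]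
        exact Ideal.absNorm_mem v.asIdeal
      have hNle := lt_one_le_ofAdd_neg_one hNlt
      have hpow : ((Multiplicative.ofAdd (-1 : ℤ) : Multiplicative ℤ) :
            WithZero (Multiplicative ℤ)) ^ (t v).toNat =
          ((Multiplicative.ofAdd (-(t v)) : Multiplicative ℤ) :
            WithZero (Multiplicative ℤ)) := by
        rw [← WithZero.coe_pow, WithZero.coe_inj, ← ofAdd_nsmul]
        congr 1
        simp only [nsmul_eq_mul, mul_neg_one]
        omega
      have hmv : v.intValuation ((m v : ℕ) : 𝓞 K) ≤
          ((Multiplicative.ofAdd (-(t v)) : Multiplicative ℤ) :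
            WithZero (Multiplicative ℤ)) := by
        simp only [hm, if_pos hvt]
        push_cast
        rw [map_pow, ← hpow]
        exact pow_le_pow_left' hNle _
      refine le_trans (mul_le_mul' (le_trans hmono hmv) (le_of_eq (hvalx v))) ?_
      rw [← WithZero.coe_mul, ← ofAdd_add]
      simp
    · have hx1 : v.valuation K x ≤ 1 := by
        rw [hvalx v, ← WithZero.coe_one, WithZero.coe_le_coe]
        have : t v ≤ 0 := not_lt.mp hvt
        exact this
      exact mul_le_one' (v.intValuation_le_one _) hx1
  obtain ⟨y, hy⟩ := exists_int_of_val_le_one ((c:K) * x) hval_le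
  exact ⟨y, by rw [← hy]⟩


end Aux

set_option maxHeartbeats 1000000 in
theorem pethoSchmitt (n : ℕ) (hn : Module.finrank ℚ K = n)
    (B : ℝ) (hB : 1 ≤ B)
    (ω : Fin n → 𝓞 K) (b : Module.Basis (Fin n) ℤ (𝓞 K)) (hb : ∀ i, b i = ω i)
    (hred : ∏ i, minkowskiNorm K (ω i : K) ≤
      2 ^ ((n * (n - 1) : ℝ) / 4) * Real.sqrt |(NumberField.discr K : ℝ)|)
    (hlen : ∀ i, Real.sqrt n ≤ minkowskiNorm K (ω i : K))
    (x : K) (hx : relHeight K x ≤ B) :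
    ∃ (a : Fin n → ℤ) (c : ℤ), 1 ≤ c ∧ (c : ℝ) ≤ B ∧
      (∀ i, (|a i| : ℝ) ≤ 2 ^ ((n * (n - 1) : ℝ) / 4) * B * c) ∧
      x = (∑ i, (a i : K) * (ω i : K)) / (c : K) := by
  classical
  obtain ⟨c, hcpos, hcle, hfin1, y, hy⟩ := denom_lemma K x
  set A : ℝ := ∏ w : InfinitePlace K, max (w x ^ w.mult) 1 with hA
  set P : ℝ := ∏ᶠ v : HeightOneSpectrum (𝓞 K), max (vadicAbs K v x) 1 with hP
  have harch1 : (1:ℝ) ≤ A := by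
    rw [hA]
    calc (1:ℝ) = ∏ _w : InfinitePlace K, 1 := by simp
    _ ≤ _ := Finset.prod_le_prod (fun _ _ => zero_le_one) (fun w _ => le_max_right _ _)
  have hxAP : A * P ≤ B := hx
  have hP0 : (0:ℝ) ≤ P := le_trans zero_le_one hfin1
  have hPB : P ≤ B := by nlinarith [mul_nonneg (sub_nonneg.mpr harch1) hP0]
  have hAB : A ≤ B := by
    nlinarith [mul_nonneg (sub_nonneg.mpr hfin1) (le_trans zero_le_one harch1)]
  have hcB : (c : ℝ) ≤ B := le_trans hcle hPB
  -- archimedean bound on each embedding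
  have hφ : ∀ φ : K →+* ℂ, ‖φ x‖ ≤ B := by
    intro φ
    set w : InfinitePlace K := InfinitePlace.mk φ with hw
    have hfac : max (w x ^ w.mult) 1 ≤ A := by
      rw [hA, ← Finset.prod_erase_mul Finset.univ _ (Finset.mem_univ w)]
      have h1 : (1:ℝ) ≤ ∏ u ∈ Finset.univ.erase w, max (u x ^ u.mult) 1 := by
        calc (1:ℝ) = ∏ _u ∈ Finset.univ.erase w, 1 := by simp
        _ ≤ _ := Finset.prod_le_prod (fun _ _ => zero_le_one) (fun u _ => le_max_right _ _)
      nlinarith [le_max_right (w x ^ w.mult) (1:ℝ), (show (0:ℝ) ≤ max (w x ^ w.mult) 1 from le_trans zero_le_one (le_max_right _ _))]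
    have hwx : w x = ‖φ x‖ := InfinitePlace.apply φ x
    have hpow : w x ^ w.mult ≤ B := le_trans (le_trans (le_max_left _ _) hfac) hAB
    rcases le_or_gt (‖φ x‖) 1 with h | h
    · exact le_trans h hB
    · have hmult : w.mult ≠ 0 := by
        rw [NumberField.InfinitePlace.mult]; split <;> norm_num
      calc ‖φ x‖ ≤ ‖φ x‖ ^ w.mult :=
          le_self_pow₀ (le_of_lt h) hmult
      _ = w x ^ w.mult := by rw [hwx]
      _ ≤ B := hpow
  have hcR0 : (0:ℝ) ≤ (c:ℝ) := Nat.cast_nonneg c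
  have hminky : minkowskiNorm K (y : K) ≤ Real.sqrt n * ((c:ℝ) * B) := by
    rw [minkowskiNorm]
    have hsum : (∑ φ : K →+* ℂ, ‖(φ (y:K))‖ ^ 2) ≤ n * ((c:ℝ) * B)^2 := by
      have hcard : Fintype.card (K →+* ℂ) = n := by
        rw [NumberField.Embeddings.card K ℂ, hn]
      calc (∑ φ : K →+* ℂ, ‖(φ (y:K))‖ ^ 2)
          ≤ ∑ _φ : K →+* ℂ, ((c:ℝ) * B)^2 := by
            apply Finset.sum_le_sum
            intro φ _
            have h1 : ‖(φ (y:K))‖ = (c:ℝ) * ‖φ x‖ := by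
              rw [hy, map_mul, norm_mul]
              rw [map_natCast]
              simp [Complex.norm_natCast]
            rw [h1]
            have h2 : (c:ℝ) * ‖φ x‖ ≤ (c:ℝ) * B :=
              mul_le_mul_of_nonneg_left (hφ φ) hcR0
            exact pow_le_pow_left₀ (by positivity) h2 2
        _ = n * ((c:ℝ) * B)^2 := by
            rw [Finset.sum_const, Finset.card_univ, hcard, nsmul_eq_mul]
    calc Real.sqrt (∑ φ : K →+* ℂ, ‖(φ (y:K))‖ ^ 2)
        ≤ Real.sqrt (n * ((c:ℝ) * B)^2) := Real.sqrt_le_sqrt hsum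
      _ = Real.sqrt n * ((c:ℝ) * B) := by
          rw [Real.sqrt_mul (Nat.cast_nonneg n), Real.sqrt_sq (by positivity)]
  -- algebraic embeddings and the matrix
  have hcardA : Fintype.card (K →ₐ[ℚ] ℂ) = n := by rw [AlgHom.card, hn]
  set e : Fin n ≃ (K →ₐ[ℚ] ℂ) := Fintype.equivOfCardEq (by rw [hcardA, Fintype.card_fin]) with he
  have hsum_eq : ∀ z : K,
      (∑ φ : K →+* ℂ, ‖φ z‖ ^ 2) = ∑ i : Fin n, ‖(e i) z‖ ^ 2 := by
    intro z
    have h1 : (∑ i : Fin n, ‖(e i) z‖ ^ 2) =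
        ∑ ψ : K →ₐ[ℚ] ℂ, ‖ψ z‖ ^ 2 :=
      Equiv.sum_comp e (fun ψ : K →ₐ[ℚ] ℂ => ‖ψ z‖ ^ 2)
    have h2 : (∑ φ : K →+* ℂ, ‖
        (RingHom.equivRatAlgHom (R := K) (S := ℂ) φ) z‖ ^ 2) =
        ∑ ψ : K →ₐ[ℚ] ℂ, ‖ψ z‖ ^ 2 :=
      Equiv.sum_comp (RingHom.equivRatAlgHom (R := K) (S := ℂ))
        (fun ψ : K →ₐ[ℚ] ℂ => ‖ψ z‖ ^ 2)
    rw [h1, ← h2]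
    exact Finset.sum_congr rfl fun φ _ => rfl
  have hmink_eq : ∀ z : K,
      minkowskiNorm K z = Real.sqrt (∑ i : Fin n, ‖(e i) z‖ ^ 2) := by
    intro z; rw [minkowskiNorm, hsum_eq]
  set bQ : Module.Basis (Fin n) ℚ K := Module.Basis.localizationLocalization ℚ ℤ⁰ K b with hbQdef
  have hbQ : ∀ i, bQ i = (ω i : K) := by
    intro i
    rw [hbQdef, Module.Basis.localizationLocalization_apply, hb]
  set M : Matrix (Fin n) (Fin n) ℂ := Matrix.of (fun i j => (e i) ((ω j : K))) with hM
  have hMT : M = (Algebra.embeddingsMatrixReindex ℚ ℂ (⇑bQ) e).transpose := by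
    ext i j
    rw [hM]
    simp only [Matrix.transpose_apply, Algebra.embeddingsMatrixReindex,
      Algebra.embeddingsMatrix, Matrix.reindex_apply, Matrix.submatrix_apply, Matrix.of_apply]
    rw [hbQ]
    rfl
  have hdet2 : M.det ^ 2 = ((NumberField.discr K : ℤ) : ℂ) := by
    rw [hMT, Matrix.det_transpose]
    rw [← Algebra.discr_eq_det_embeddingsMatrixReindex_pow_two ℚ ℂ (⇑bQ) e]
    rw [hbQdef, Algebra.discr_localizationLocalization ℤ ℤ⁰ K b]
    have hd : Algebra.discr ℤ ⇑b = NumberField.discr K := NumberField.discr_eq_discr K b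
    rw [hd]
    simp [eq_intCast]
  set D : ℝ := Real.sqrt |(NumberField.discr K : ℝ)| with hD
  have hDpos : (0:ℝ) < D := by
    rw [hD]
    apply Real.sqrt_pos.mpr
    have := NumberField.discr_ne_zero K
    rw [abs_pos]
    exact_mod_cast this
  have habsdet : ‖M.det‖ = D := by
    have h1 : (‖M.det‖)^2 = |(NumberField.discr K : ℝ)| := by
      rw [← norm_pow, hdet2, Complex.norm_intCast]
    rw [hD, ← h1, Real.sqrt_sq (norm_nonneg _)]
  -- coordinates of y
  set a : Fin n → ℤ := fun i => b.repr y i with ha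
  have hya : (y : K) = ∑ j, (a j : K) * (ω j : K) := by
    have hsum := Module.Basis.sum_repr b y
    calc (y:K) = algebraMap (𝓞 K) K y := rfl
    _ = algebraMap (𝓞 K) K (∑ j, b.repr y j • b j) := by rw [hsum]
    _ = ∑ j, (a j : K) * (ω j : K) := by
        rw [map_sum]
        apply Finset.sum_congr rfl
        intro j _
        rw [map_zsmul, ha, zsmul_eq_mul, hb]
  have hYM : (fun i => (e i) ((y:K))) = M.mulVec (fun j => ((a j : ℤ) : ℂ)) := by
    funext i
    show (e i) ((y:K)) = ∑ j, M i j * ((a j : ℤ) : ℂ)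
    rw [hya, map_sum]
    apply Finset.sum_congr rfl
    intro j _
    rw [map_mul, map_intCast]
    rw [hM]
    simp [mul_comm]
  have hcramer : ∀ i, (M.updateCol i (fun r => (e r) ((y:K)))).det = M.det * ((a i : ℤ) : ℂ) := by
    intro i
    rw [← Matrix.cramer_apply, hYM, Matrix.cramer_eq_adjugate_mulVec, Matrix.mulVec_mulVec,
      Matrix.adjugate_mul, Matrix.smul_mulVec, Matrix.one_mulVec]
    simp [smul_eq_mul]
  set q : ℝ := 2 ^ ((n * (n - 1) : ℝ) / 4) with hq
  have hq0 : (0:ℝ) < q := by rw [hq]; positivity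
  have hnpos : 0 < n := by
    have h : 0 < Module.finrank ℚ K := Module.finrank_pos
    rw [hn] at h
    exact h
  have hs0 : (0:ℝ) < Real.sqrt n := Real.sqrt_pos.mpr (by exact_mod_cast hnpos)
  have hmnonneg : ∀ j, 0 ≤ minkowskiNorm K (ω j : K) := fun j => Real.sqrt_nonneg _
  have hmY0 : 0 ≤ minkowskiNorm K (y : K) := Real.sqrt_nonneg _
  have hbound : ∀ i, (|a i| : ℝ) ≤ q * B * c := by
    intro i
    set Y : Fin n → ℂ := fun r => (e r) ((y:K)) with hY
    haveI : WellFoundedLT (Fin n) := Finite.to_wellFoundedLT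
    have hH := hadamardIneq (M.updateCol i Y)
    have hcol : ∀ j, Real.sqrt (∑ r, ‖(M.updateCol i Y) r j‖ ^ 2) =
        if j = i then minkowskiNorm K (y:K) else minkowskiNorm K (ω j : K) := by
      intro j
      by_cases hj : j = i
      · subst hj
        rw [if_pos rfl, hmink_eq]
        congr 1
        apply Finset.sum_congr rfl
        intro r _
        rw [Matrix.updateCol_apply, if_pos rfl]
      · rw [if_neg hj, hmink_eq]
        congr 1
        apply Finset.sum_congr rfl
        intro r _
        rw [Matrix.updateCol_apply, if_neg hj, hM]
        rfl
    have hprod : (∏ j, Real.sqrt (∑ r, ‖(M.updateCol i Y) r j‖ ^ 2)) =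
        minkowskiNorm K (y:K) * ∏ j ∈ Finset.univ.erase i, minkowskiNorm K (ω j : K) := by
      rw [Finset.prod_congr rfl (fun j _ => hcol j)]
      rw [← Finset.prod_erase_mul Finset.univ _ (Finset.mem_univ i), if_pos rfl]
      rw [Finset.prod_congr rfl (fun j hj => if_neg (Finset.ne_of_mem_erase hj))]
      ring
    have hlhs : ‖(M.updateCol i Y).det‖ = D * |(a i : ℝ)| := by
      rw [hcramer i, norm_mul, habsdet, Complex.norm_intCast]
    rw [hlhs, hprod] at hH
    -- assemble the chain of inequalities
    set Pi : ℝ := ∏ j ∈ Finset.univ.erase i, minkowskiNorm K (ω j : K) with hPi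
    have hPi0 : 0 ≤ Pi := Finset.prod_nonneg (fun j _ => hmnonneg j)
    have hPifull : Pi * minkowskiNorm K (ω i : K) = ∏ j, minkowskiNorm K (ω j : K) :=
      Finset.prod_erase_mul Finset.univ _ (Finset.mem_univ i)
    have hDS : (0:ℝ) < D * Real.sqrt n := by positivity
    have hfinal : (D * Real.sqrt n) * |(a i : ℝ)| ≤ (D * Real.sqrt n) * (q * B * c) := by
      nlinarith [mul_le_mul_of_nonneg_right hH (hmnonneg i),
        mul_le_mul_of_nonneg_left hred hmY0,
        mul_le_mul_of_nonneg_right hminky (le_of_lt (mul_pos hq0 hDpos)),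
        mul_le_mul_of_nonneg_left (hlen i) (mul_nonneg (le_of_lt hDpos) (abs_nonneg ((a i : ℝ)))),
        hPifull, hcB, hB, hcR0, hPi0, hmY0, hq0.le, hDpos.le, hs0.le]
    have := le_of_mul_le_mul_left hfinal hDS
    exact_mod_cast this
  refine ⟨a, (c : ℤ), by exact_mod_cast hcpos, by push_cast; exact hcB, ?_, ?_⟩
  · intro i
    have := hbound i
    push_cast
    push_cast at this
    exact this
  · have hcKne : ((c:ℕ) : K) ≠ 0 := by
      simp only [ne_eq, Nat.cast_eq_zero]
      omega
    rw [show (((c:ℤ)) : K) = ((c:ℕ) : K) by push_cast; ring]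
    rw [← hya, hy]
    field_simp
end
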